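/- arXiv:1604.04423 — 15 statements merged into one kernel-verified Lean document; each statement's English description precedes it below -/
import Mathlib

section
/- For all natural numbers n ≥ 1 and r ≥ 1 there exists a constant c = c(r,n) > 0 such that for any two n-tuples X and Y of real polynomials in n variables, each component having total degree at most r and zero constant coefficient, the composition satisfies ⫴Y ∘ X⫴ ≤ ⫴Y⫴ · max(⫴X⫴, ⫴X⫴^r) · c. -/
open MvPolynomial

/-- The coefficient norm of an `n`-tuple of real polynomials in `n` variables:
the supremum (= maximum) of the absolute values of all monomial coefficients
of all components. -/
noncomputable def coeffNorm {n : ℕ} (P : Fin n → MvPolynomial (Fin n) ℝ) : ℝ :=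
  ⨆ i : Fin n, ⨆ d : Fin n →₀ ℕ, |MvPolynomial.coeff d (P i)|

/-- The composition `Y ∘ X` of `n`-tuples of polynomials: substitute the
components of `X` for the variables in each component of `Y`. -/
noncomputable def polyComp {n : ℕ} (Y X : Fin n → MvPolynomial (Fin n) ℝ) :
    Fin n → MvPolynomial (Fin n) ℝ :=
  fun i => MvPolynomial.bind₁ X (Y i)

section Aux

variable {n : ℕ}

/-- ℓ¹ norm of coefficients. -/
noncomputable def tnorm (p : MvPolynomial (Fin n) ℝ) : ℝ :=
  ∑ d ∈ p.support, |MvPolynomial.coeff d p|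

lemma tnorm_nonneg (p : MvPolynomial (Fin n) ℝ) : 0 ≤ tnorm p :=
  Finset.sum_nonneg fun _ _ => abs_nonneg _

lemma abs_coeff_le_tnorm (d : Fin n →₀ ℕ) (p : MvPolynomial (Fin n) ℝ) :
    |MvPolynomial.coeff d p| ≤ tnorm p := by
  by_cases h : d ∈ p.support
  · exact Finset.single_le_sum (f := fun d => |MvPolynomial.coeff d p|) (fun _ _ => abs_nonneg _) h
  · rw [MvPolynomial.notMem_support_iff.mp h, abs_zero]
    exact tnorm_nonneg p

lemma tnorm_mul (p q : MvPolynomial (Fin n) ℝ) : tnorm (p * q) ≤ tnorm p * tnorm q := by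
  classical
  have h1 : tnorm (p * q) ≤
      ∑ d ∈ (p * q).support, ∑ x ∈ Finset.HasAntidiagonal.antidiagonal d ∩ (p.support ×ˢ q.support),
        |MvPolynomial.coeff x.1 p| * |MvPolynomial.coeff x.2 q| := by
    apply Finset.sum_le_sum
    intro d _
    rw [MvPolynomial.coeff_mul]
    calc |∑ x ∈ Finset.HasAntidiagonal.antidiagonal d, MvPolynomial.coeff x.1 p * MvPolynomial.coeff x.2 q|
        ≤ ∑ x ∈ Finset.HasAntidiagonal.antidiagonal d, |MvPolynomial.coeff x.1 p * MvPolynomial.coeff x.2 q| :=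
          Finset.abs_sum_le_sum_abs _ _
      _ = ∑ x ∈ Finset.HasAntidiagonal.antidiagonal d ∩ (p.support ×ˢ q.support),
            |MvPolynomial.coeff x.1 p * MvPolynomial.coeff x.2 q| := by
          refine (Finset.sum_subset Finset.inter_subset_left ?_).symm
          intro x hx hx'
          have : x.1 ∉ p.support ∨ x.2 ∉ q.support := by
            by_contra hc
            push_neg at hc
            exact hx' (Finset.mem_inter.mpr ⟨hx, Finset.mem_product.mpr hc⟩)
          rcases this with h | h
          · rw [MvPolynomial.notMem_support_iff.mp h, zero_mul, abs_zero]
          · rw [MvPolynomial.notMem_support_iff.mp h, mul_zero, abs_zero]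
      _ ≤ ∑ x ∈ Finset.HasAntidiagonal.antidiagonal d ∩ (p.support ×ˢ q.support),
            |MvPolynomial.coeff x.1 p| * |MvPolynomial.coeff x.2 q| := by
          apply le_of_eq
          exact Finset.sum_congr rfl fun x _ => abs_mul _ _
  refine h1.trans ?_
  have hdisj : ∀ a ∈ (p * q).support, ∀ b ∈ (p * q).support, a ≠ b →
      Disjoint (Finset.HasAntidiagonal.antidiagonal a ∩ (p.support ×ˢ q.support))
        (Finset.HasAntidiagonal.antidiagonal b ∩ (p.support ×ˢ q.support)) := by
    intro a _ b _ hab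
    apply Finset.disjoint_left.mpr
    intro x hx hx'
    have h1 := Finset.HasAntidiagonal.mem_antidiagonal.mp (Finset.mem_inter.mp hx).1
    have h2 := Finset.HasAntidiagonal.mem_antidiagonal.mp (Finset.mem_inter.mp hx').1
    exact hab (h1 ▸ h2.symm ▸ rfl)
  rw [← Finset.sum_biUnion hdisj]
  have hsub : ((p * q).support.biUnion fun d =>
      Finset.HasAntidiagonal.antidiagonal d ∩ (p.support ×ˢ q.support)) ⊆ p.support ×ˢ q.support := by
    intro x hx
    rw [Finset.mem_biUnion] at hx
    obtain ⟨d, _, hx⟩ := hx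
    exact (Finset.mem_inter.mp hx).2
  calc ∑ x ∈ ((p * q).support.biUnion fun d =>
          Finset.HasAntidiagonal.antidiagonal d ∩ (p.support ×ˢ q.support)),
        |MvPolynomial.coeff x.1 p| * |MvPolynomial.coeff x.2 q|
      ≤ ∑ x ∈ p.support ×ˢ q.support,
          |MvPolynomial.coeff x.1 p| * |MvPolynomial.coeff x.2 q| :=
        Finset.sum_le_sum_of_subset_of_nonneg hsub
          (fun x _ _ => mul_nonneg (abs_nonneg _) (abs_nonneg _))
    _ = tnorm p * tnorm q := by
        rw [tnorm, tnorm, Finset.sum_mul_sum, Finset.sum_product]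

lemma tnorm_one : tnorm (1 : MvPolynomial (Fin n) ℝ) = 1 := by
  classical
  have h : (1 : MvPolynomial (Fin n) ℝ).support = {0} := by
    rw [← MvPolynomial.C_1, MvPolynomial.C_apply, MvPolynomial.support_monomial,
      if_neg one_ne_zero]
  rw [tnorm, h]
  simp [MvPolynomial.coeff_one]

lemma tnorm_prod {α : Type*} (s : Finset α) (f : α → MvPolynomial (Fin n) ℝ) :
    tnorm (∏ j ∈ s, f j) ≤ ∏ j ∈ s, tnorm (f j) := by
  classical
  induction s using Finset.cons_induction with
  | empty => simp [tnorm_one]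
  | cons a s ha ih =>
    rw [Finset.prod_cons, Finset.prod_cons]
    calc tnorm (f a * ∏ j ∈ s, f j) ≤ tnorm (f a) * tnorm (∏ j ∈ s, f j) := tnorm_mul _ _
      _ ≤ tnorm (f a) * ∏ j ∈ s, tnorm (f j) :=
          mul_le_mul_of_nonneg_left ih (tnorm_nonneg _)

lemma tnorm_pow (p : MvPolynomial (Fin n) ℝ) (k : ℕ) : tnorm (p ^ k) ≤ tnorm p ^ k := by
  have := tnorm_prod (Finset.range k) (fun _ => p)
  simpa using this

lemma support_subset_Iic {p : MvPolynomial (Fin n) ℝ} {r : ℕ} (hp : p.totalDegree ≤ r) :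
    p.support ⊆ Finset.Iic (Finsupp.equivFunOnFinite.symm fun _ : Fin n => r) := by
  intro d hd
  rw [Finset.mem_Iic]
  refine Finsupp.le_def.mpr fun j => ?_
  have h2 : d j ≤ d.sum fun _ e => e := by
    by_cases h : d j = 0
    · simp [h]
    · exact Finset.single_le_sum (f := fun k => d k) (fun _ _ => Nat.zero_le _)
        (Finsupp.mem_support_iff.mpr h)
  simpa using h2.trans ((MvPolynomial.le_totalDegree hd).trans hp)

lemma inner_bdd (p : MvPolynomial (Fin n) ℝ) :
    BddAbove (Set.range fun d => |MvPolynomial.coeff d p|) :=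
  ⟨tnorm p, by rintro _ ⟨d, rfl⟩; exact abs_coeff_le_tnorm d p⟩

lemma abs_coeff_le_coeffNorm (P : Fin n → MvPolynomial (Fin n) ℝ) (i : Fin n)
    (d : Fin n →₀ ℕ) : |MvPolynomial.coeff d (P i)| ≤ coeffNorm P := by
  have h1 : |MvPolynomial.coeff d (P i)| ≤ ⨆ e, |MvPolynomial.coeff e (P i)| :=
    le_ciSup (inner_bdd (P i)) d
  refine h1.trans (le_ciSup (f := fun i => ⨆ e, |MvPolynomial.coeff e (P i)|) ?_ i)
  exact Set.Finite.bddAbove (Set.finite_range _)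

lemma coeffNorm_nonneg (hn : 0 < n) (P : Fin n → MvPolynomial (Fin n) ℝ) :
    0 ≤ coeffNorm P :=
  (abs_nonneg _).trans (abs_coeff_le_coeffNorm P ⟨0, hn⟩ 0)

lemma coeffNorm_le (hn : 0 < n) (P : Fin n → MvPolynomial (Fin n) ℝ) {B : ℝ}
    (h : ∀ i d, |MvPolynomial.coeff d (P i)| ≤ B) : coeffNorm P ≤ B := by
  have : Nonempty (Fin n) := ⟨⟨0, hn⟩⟩
  exact ciSup_le fun i => ciSup_le fun d => h i d

lemma pow_le_max {x : ℝ} (hx : 0 ≤ x) {k r : ℕ} (h1 : 1 ≤ k) (h2 : k ≤ r) :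
    x ^ k ≤ max x (x ^ r) := by
  rcases le_total x 1 with h | h
  · refine le_max_of_le_left ?_
    calc x ^ k ≤ x ^ 1 := pow_le_pow_of_le_one hx h h1
      _ = x := pow_one x
  · exact le_max_of_le_right (pow_le_pow_right₀ h h2)

end Aux
theorem coeffNorm_comp_le (n r : ℕ) (hn : 1 ≤ n) (hr : 1 ≤ r) :
    ∃ c : ℝ, 0 < c ∧
      ∀ X Y : Fin n → MvPolynomial (Fin n) ℝ,
        (∀ i, (X i).totalDegree ≤ r) → (∀ i, MvPolynomial.constantCoeff (X i) = 0) →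
        (∀ i, (Y i).totalDegree ≤ r) → (∀ i, MvPolynomial.constantCoeff (Y i) = 0) →
        coeffNorm (polyComp Y X) ≤
          coeffNorm Y * max (coeffNorm X) (coeffNorm X ^ r) * c := by
  classical
  set R : Fin n →₀ ℕ := Finsupp.equivFunOnFinite.symm fun _ : Fin n => r with hR
  set M : ℕ := (Finset.Iic R).card with hMdef
  have hM1 : 1 ≤ M := Finset.card_pos.mpr ⟨0, Finset.mem_Iic.mpr zero_le⟩
  have hM1' : (1 : ℝ) ≤ (M : ℝ) := by exact_mod_cast hM1
  refine ⟨(M : ℝ) ^ (r + 1), by positivity, ?_⟩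
  intro X Y hXd hX0 hYd hY0
  set B := coeffNorm X with hB
  set K := max B (B ^ r) with hK
  have hB0 : 0 ≤ B := coeffNorm_nonneg hn X
  have hK0 : 0 ≤ K := hB0.trans (le_max_left _ _)
  have hY0' : 0 ≤ coeffNorm Y := coeffNorm_nonneg hn Y
  -- tnorm bound for components of X
  have htX : ∀ j, tnorm (X j) ≤ (M : ℝ) * B := by
    intro j
    calc tnorm (X j) = ∑ d ∈ (X j).support, |MvPolynomial.coeff d (X j)| := rfl
      _ ≤ ∑ _d ∈ (X j).support, B :=
          Finset.sum_le_sum fun d _ => abs_coeff_le_coeffNorm X j d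
      _ = ((X j).support.card : ℝ) * B := by rw [Finset.sum_const, nsmul_eq_mul]
      _ ≤ (M : ℝ) * B := by
          refine mul_le_mul_of_nonneg_right ?_ hB0
          exact_mod_cast Finset.card_le_card (support_subset_Iic (hXd j))
  -- bound on products of powers of X
  have hprod : ∀ d : Fin n →₀ ℕ, (d.sum fun _ e => e) ≤ r → d ≠ 0 →
      tnorm (∏ j ∈ d.support, X j ^ d j) ≤ (M : ℝ) ^ r * K := by
    intro d hdr hd0
    have hk1 : 1 ≤ d.sum fun _ e => e := by
      rcases Nat.eq_zero_or_pos (d.sum fun _ e => e) with h | h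
      · exfalso
        apply hd0
        have := (Finset.sum_eq_zero_iff).mp h
        ext j
        by_cases hj : j ∈ d.support
        · exact this j hj
        · simpa using Finsupp.notMem_support_iff.mp hj
      · exact h
    calc tnorm (∏ j ∈ d.support, X j ^ d j)
        ≤ ∏ j ∈ d.support, tnorm (X j ^ d j) := tnorm_prod _ _
      _ ≤ ∏ j ∈ d.support, ((M : ℝ) * B) ^ d j := by
          refine Finset.prod_le_prod (fun j _ => tnorm_nonneg _) fun j _ => ?_
          exact (tnorm_pow _ _).trans
            (pow_le_pow_left₀ (tnorm_nonneg _) (htX j) _)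
      _ = ((M : ℝ) * B) ^ (d.sum fun _ e => e) := by
          rw [Finset.prod_pow_eq_pow_sum]
          rfl
      _ = (M : ℝ) ^ (d.sum fun _ e => e) * B ^ (d.sum fun _ e => e) := mul_pow _ _ _
      _ ≤ (M : ℝ) ^ r * K := by
          refine mul_le_mul (pow_le_pow_right₀ hM1' hdr)
            (pow_le_max hB0 hk1 hdr) (by positivity) (by positivity)
  -- the coefficient bound for the composition
  have hbound : ∀ (i : Fin n) (e : Fin n →₀ ℕ),
      |MvPolynomial.coeff e (polyComp Y X i)| ≤
        (M : ℝ) * (coeffNorm Y * ((M : ℝ) ^ r * K)) := by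
    intro i e
    show |MvPolynomial.coeff e (MvPolynomial.bind₁ X (Y i))| ≤
      (M : ℝ) * (coeffNorm Y * ((M : ℝ) ^ r * K))
    have hexp : MvPolynomial.bind₁ X (Y i) =
        ∑ d ∈ (Y i).support, MvPolynomial.C (MvPolynomial.coeff d (Y i)) *
          ∏ j ∈ d.support, X j ^ d j := by
      rw [MvPolynomial.bind₁, MvPolynomial.aeval_def, MvPolynomial.algebraMap_eq,
        MvPolynomial.eval₂_eq]
    rw [hexp, MvPolynomial.coeff_sum]
    calc |∑ d ∈ (Y i).support, MvPolynomial.coeff e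
            (MvPolynomial.C (MvPolynomial.coeff d (Y i)) * ∏ j ∈ d.support, X j ^ d j)|
        ≤ ∑ d ∈ (Y i).support, |MvPolynomial.coeff e
            (MvPolynomial.C (MvPolynomial.coeff d (Y i)) * ∏ j ∈ d.support, X j ^ d j)| :=
          Finset.abs_sum_le_sum_abs _ _
      _ ≤ ∑ _d ∈ (Y i).support, coeffNorm Y * ((M : ℝ) ^ r * K) := by
          refine Finset.sum_le_sum fun d hd => ?_
          rw [MvPolynomial.coeff_C_mul, abs_mul]
          have hd0 : d ≠ 0 := by
            intro h
            have : MvPolynomial.coeff d (Y i) ≠ 0 := MvPolynomial.mem_support_iff.mp hd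
            rw [h] at this
            exact this (hY0 i)
          have hdr : (d.sum fun _ e => e) ≤ r :=
            (MvPolynomial.le_totalDegree hd).trans (hYd i)
          exact mul_le_mul (abs_coeff_le_coeffNorm Y i d)
            ((abs_coeff_le_tnorm _ _).trans (hprod d hdr hd0))
            (abs_nonneg _) hY0'
      _ = ((Y i).support.card : ℝ) * (coeffNorm Y * ((M : ℝ) ^ r * K)) := by
          rw [Finset.sum_const, nsmul_eq_mul]
      _ ≤ (M : ℝ) * (coeffNorm Y * ((M : ℝ) ^ r * K)) := by
          refine mul_le_mul_of_nonneg_right ?_ (by positivity)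
          exact_mod_cast Finset.card_le_card (support_subset_Iic (hYd i))
  refine (coeffNorm_le hn _ hbound).trans (le_of_eq ?_)
  rw [pow_succ]
  ring
end

section
/- If a multi-index d : Fin n → ℕ and an index i satisfy the subresonance condition w i ≤ Σ_j (d j)·(w j), then the total degree satisfies Σ_j d j ≤ wmin/wmax. Consequently, every monomial occurring in a subresonance polynomial self-map has total degree at most ⌊wmin/wmax⌋. -/
open MvPolynomial

/-- The minimum of the weights `w : Fin n → ℝ` (for `n ≥ 1`). -/
noncomputable def wmin {n : ℕ} (hn : 1 ≤ n) (w : Fin n → ℝ) : ℝ :=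
  Finset.univ.inf' (Finset.univ_nonempty_iff.mpr ⟨⟨0, hn⟩⟩) w

/-- The maximum of the weights `w : Fin n → ℝ` (for `n ≥ 1`). -/
noncomputable def wmax {n : ℕ} (hn : 1 ≤ n) (w : Fin n → ℝ) : ℝ :=
  Finset.univ.sup' (Finset.univ_nonempty_iff.mpr ⟨⟨0, hn⟩⟩) w

/-- If a multi-index `d : Fin n → ℕ` and an index `i` satisfy the
subresonance condition `w i ≤ Σ_j (d j)·(w j)`, then `Σ_j d j ≤ wmin/wmax`.
Consequently, every monomial occurring in a subresonance polynomial self-map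
has total degree at most `⌊wmin/wmax⌋`. -/
theorem subresonance_degree_bound (n : ℕ) (hn : 1 ≤ n) (w : Fin n → ℝ)
    (hw : ∀ j, w j < 0) :
    (∀ (d : Fin n → ℕ) (i : Fin n),
        w i ≤ ∑ j, (d j : ℝ) * w j →
        (∑ j, (d j : ℝ)) ≤ wmin hn w / wmax hn w) ∧
    (∀ P : Fin n → MvPolynomial (Fin n) ℝ,
        (∀ i, MvPolynomial.constantCoeff (P i) = 0) →
        (∀ i, ∀ d ∈ (P i).support, w i - ∑ j, (d j : ℝ) * w j ≤ 0) →
        ∀ i, ∀ d ∈ (P i).support, (∑ j, d j) ≤ ⌊wmin hn w / wmax hn w⌋₊) := by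
  have hmaxneg : wmax hn w < 0 := by
    apply (Finset.sup'_lt_iff _).mpr
    intro j _; exact hw j
  have key : ∀ (d : Fin n → ℕ) (i : Fin n),
      w i ≤ ∑ j, (d j : ℝ) * w j → (∑ j, (d j : ℝ)) ≤ wmin hn w / wmax hn w := by
    intro d i h
    rw [le_div_iff_of_neg hmaxneg]
    have h1 : ∑ j, (d j : ℝ) * w j ≤ (∑ j, (d j : ℝ)) * wmax hn w := by
      rw [Finset.sum_mul]
      apply Finset.sum_le_sum
      intro j _
      exact mul_le_mul_of_nonneg_left (Finset.le_sup' w (Finset.mem_univ j))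
        (Nat.cast_nonneg _)
    have h2 : wmin hn w ≤ w i := Finset.inf'_le w (Finset.mem_univ i)
    linarith
  refine ⟨key, ?_⟩
  intro P _ hsub i d hd
  have h := hsub i d hd
  have := key (fun j => d j) i (by linarith)
  apply Nat.le_floor
  calc ((∑ j, d j : ℕ) : ℝ) = ∑ j, ((d j : ℕ) : ℝ) := by push_cast; rfl
    _ ≤ wmin hn w / wmax hn w := this
end

section
/- The composition of two subresonance polynomial self-maps of ℝ^n (substituting the components of one tuple for the variables in the components of the other) is again a subresonance polynomial self-map of ℝ^n. -/
open MvPolynomial Finset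

noncomputable def Wt {n : ℕ} (w : Fin n → ℝ) (e : Fin n →₀ ℕ) : ℝ := ∑ j, (e j : ℝ) * w j

lemma Wt_add {n : ℕ} (w : Fin n → ℝ) (e f : Fin n →₀ ℕ) :
    Wt w (e + f) = Wt w e + Wt w f := by
  simp [Wt, Finsupp.add_apply, add_mul, Finset.sum_add_distrib, Nat.cast_add]

lemma Wt_zero {n : ℕ} (w : Fin n → ℝ) : Wt w 0 = 0 := by simp [Wt]

lemma lb_mul {n : ℕ} {w : Fin n → ℝ} {p q : MvPolynomial (Fin n) ℝ} {a b : ℝ}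
    (hp : ∀ e ∈ p.support, a ≤ Wt w e) (hq : ∀ e ∈ q.support, b ≤ Wt w e) :
    ∀ e ∈ (p * q).support, a + b ≤ Wt w e := by
  intro e he
  classical
  have := MvPolynomial.support_mul p q he
  rw [Finset.mem_add] at this
  obtain ⟨e1, h1, e2, h2, rfl⟩ := this
  rw [Wt_add]
  exact add_le_add (hp _ h1) (hq _ h2)

lemma lb_pow {n : ℕ} {w : Fin n → ℝ} {p : MvPolynomial (Fin n) ℝ} {a : ℝ}
    (hp : ∀ e ∈ p.support, a ≤ Wt w e) (k : ℕ) :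
    ∀ e ∈ (p ^ k).support, (k : ℝ) * a ≤ Wt w e := by
  induction k with
  | zero =>
    intro e he
    simp only [pow_zero] at he
    have h1 := MvPolynomial.mem_support_iff.mp he
    rw [MvPolynomial.coeff_one] at h1
    have : e = 0 := by by_contra h; simp [Ne.symm h] at h1
    simp [this, Wt_zero]
  | succ k ih =>
    intro e he
    rw [pow_succ] at he
    have := lb_mul ih hp e he
    push_cast
    linarith

lemma lb_prod {n : ℕ} {w : Fin n → ℝ} (Q : Fin n → MvPolynomial (Fin n) ℝ)
    (hQ : ∀ j e, e ∈ (Q j).support → w j ≤ Wt w e) (d : Fin n →₀ ℕ)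
    (s : Finset (Fin n)) :
    ∀ e ∈ (∏ j ∈ s, Q j ^ (d j)).support, (∑ j ∈ s, (d j : ℝ) * w j) ≤ Wt w e := by
  classical
  induction s using Finset.induction with
  | empty =>
    intro e he
    simp only [Finset.prod_empty] at he
    have h1 := MvPolynomial.mem_support_iff.mp he
    rw [MvPolynomial.coeff_one] at h1
    have : e = 0 := by by_contra h; simp [Ne.symm h] at h1
    simp [this, Wt_zero]
  | @insert j s hj ih =>
    intro e he
    rw [Finset.prod_insert hj] at he
    rw [Finset.sum_insert hj]
    exact lb_mul (lb_pow (hQ j) (d j)) ih e he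

theorem subresonance_comp' (n : ℕ) (hn : 1 ≤ n) (w : Fin n → ℝ) (hw : ∀ j, w j < 0)
    (P Q : Fin n → MvPolynomial (Fin n) ℝ)
    (hP0 : ∀ i, MvPolynomial.constantCoeff (P i) = 0)
    (hP : ∀ i, ∀ d ∈ (P i).support, w i - ∑ j, (d j : ℝ) * w j ≤ 0)
    (hQ0 : ∀ i, MvPolynomial.constantCoeff (Q i) = 0)
    (hQ : ∀ i, ∀ d ∈ (Q i).support, w i - ∑ j, (d j : ℝ) * w j ≤ 0) :
    (∀ i, MvPolynomial.constantCoeff (bind₁ Q (P i)) = 0) ∧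
    (∀ i, ∀ d ∈ (bind₁ Q (P i)).support, w i - ∑ j, (d j : ℝ) * w j ≤ 0) := by
  classical
  have hrw : ∀ i, bind₁ Q (P i)
      = ∑ d ∈ (P i).support, C (coeff d (P i)) * ∏ j, Q j ^ (d j) := by
    intro i
    conv_lhs => rw [(P i).as_sum]
    rw [map_sum]
    refine Finset.sum_congr rfl fun d _ => ?_
    rw [bind₁_monomial]
    congr 1
    exact Finsupp.prod_fintype d (fun j k => Q j ^ k) (fun j => pow_zero _)
  constructor
  · intro i
    rw [hrw, map_sum]
    refine Finset.sum_eq_zero fun d hd => ?_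
    have hd0 : d ≠ 0 := by
      intro h
      subst h
      have := MvPolynomial.mem_support_iff.mp hd
      exact this (hP0 i)
    obtain ⟨j, hj⟩ : ∃ j, d j ≠ 0 := by
      by_contra h; push_neg at h; exact hd0 (Finsupp.ext fun j => h j)
    rw [map_mul, map_prod]
    have : constantCoeff (Q j ^ d j) = 0 := by
      rw [map_pow, hQ0 j, zero_pow hj]
    rw [Finset.prod_eq_zero (Finset.mem_univ j) this, mul_zero]
  · intro i e he
    rw [MvPolynomial.mem_support_iff, hrw] at he
    rw [MvPolynomial.coeff_sum] at he
    obtain ⟨d, hd, hne⟩ := Finset.exists_ne_zero_of_sum_ne_zero he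
    rw [coeff_C_mul] at hne
    have hcoef : coeff e (∏ j, Q j ^ (d j)) ≠ 0 := fun h => hne (by rw [h, mul_zero])
    have h1 : (∑ j, (d j : ℝ) * w j) ≤ Wt w e := by
      refine lb_prod Q (fun j f hf => ?_) d Finset.univ e
        (MvPolynomial.mem_support_iff.mpr hcoef)
      have := hQ j f hf
      simp only [Wt]; linarith
    have h2 := hP i d hd
    simp only [Wt] at h1
    linarith


/-- The defect of the monomial with exponent multi-index `d` occurring in the
`i`-th component: `w i − Σ_j (d j)·(w j)`. -/
noncomputable def defect {n : ℕ} (w : Fin n → ℝ) (i : Fin n) (d : Fin n →₀ ℕ) : ℝ :=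
  w i - ∑ j, (d j : ℝ) * w j

/-- An `n`-tuple of polynomials with zero constant coefficients
(a polynomial self-map of `ℝ^n`). -/
def IsPolySelfMap {n : ℕ} (P : Fin n → MvPolynomial (Fin n) ℝ) : Prop :=
  ∀ i, MvPolynomial.constantCoeff (P i) = 0

/-- `P` is subresonance: every monomial occurring with nonzero coefficient in
each component has defect `≤ 0`. -/
def SubresonanceDefects {n : ℕ} (w : Fin n → ℝ)
    (P : Fin n → MvPolynomial (Fin n) ℝ) : Prop :=
  ∀ i, ∀ d ∈ (P i).support, defect w i d ≤ 0

/-- The composition of two subresonance polynomial self-maps of `ℝ^n`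
is again a subresonance polynomial self-map of `ℝ^n`. -/
theorem subresonance_comp (n : ℕ) (hn : 1 ≤ n) (w : Fin n → ℝ) (hw : ∀ j, w j < 0)
    (P Q : Fin n → MvPolynomial (Fin n) ℝ)
    (hP0 : IsPolySelfMap P) (hP : SubresonanceDefects w P)
    (hQ0 : IsPolySelfMap Q) (hQ : SubresonanceDefects w Q) :
    IsPolySelfMap (polyComp P Q) ∧ SubresonanceDefects w (polyComp P Q) := by
  exact subresonance_comp' n hn w hw P Q hP0 hP hQ0 hQ
end

section
/- The composition of two resonance polynomial self-maps of ℝ^n (substituting the components of one tuple for the variables in the components of the other) is again a resonance polynomial self-map of ℝ^n. -/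
open MvPolynomial

/-- `P` is resonance: every monomial occurring with nonzero coefficient in
each component has defect `= 0`. -/
def ResonanceDefects {n : ℕ} (w : Fin n → ℝ)
    (P : Fin n → MvPolynomial (Fin n) ℝ) : Prop :=
  ∀ i, ∀ d ∈ (P i).support, defect w i d = 0

lemma weight_eq_sum {n : ℕ} (w : Fin n → ℝ) (d : Fin n →₀ ℕ) :
    (Finsupp.weight w d : ℝ) = ∑ j, (d j : ℝ) * w j := by
  rw [Finsupp.weight_apply, Finsupp.sum_fintype]
  · simp [nsmul_eq_mul]
  · intro i; simp

lemma resonance_iff {n : ℕ} (w : Fin n → ℝ) (P : Fin n → MvPolynomial (Fin n) ℝ) :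
    ResonanceDefects w P ↔ ∀ i, (P i).IsWeightedHomogeneous w (w i) := by
  constructor
  · intro h i d hd
    have := h i d (by simpa [mem_support_iff] using hd)
    rw [weight_eq_sum]
    unfold defect at this
    linarith
  · intro h i d hd
    have := h i (by simpa [mem_support_iff] using hd)
    unfold defect
    rw [← weight_eq_sum, this]
    ring

lemma whomog_pow {n : ℕ} {w : Fin n → ℝ} {φ : MvPolynomial (Fin n) ℝ} {m : ℝ}
    (h : φ.IsWeightedHomogeneous w m) (k : ℕ) :
    (φ ^ k).IsWeightedHomogeneous w (k • m) := by
  induction k with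
  | zero => simpa using isWeightedHomogeneous_one ℝ w
  | succ k ih =>
      rw [pow_succ, succ_nsmul]
      exact ih.mul h

lemma whomog_bind₁ {n : ℕ} {w : Fin n → ℝ} {p : MvPolynomial (Fin n) ℝ} {m : ℝ}
    (Q : Fin n → MvPolynomial (Fin n) ℝ)
    (hp : p.IsWeightedHomogeneous w m)
    (hQ : ∀ j, (Q j).IsWeightedHomogeneous w (w j)) :
    (MvPolynomial.bind₁ Q p).IsWeightedHomogeneous w m := by
  conv_lhs => rw [p.as_sum]
  rw [map_sum]
  apply IsWeightedHomogeneous.sum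
  intro d hd
  rw [bind₁_monomial]
  have h1 : (C (coeff d p) : MvPolynomial (Fin n) ℝ).IsWeightedHomogeneous w 0 :=
    isWeightedHomogeneous_C w _
  have h2 : (∏ j ∈ d.support, Q j ^ d j).IsWeightedHomogeneous w
      (∑ j ∈ d.support, (d j) • w j) :=
    IsWeightedHomogeneous.prod _ _ _ (fun j _ => whomog_pow (hQ j) (d j))
  have hm : (∑ j ∈ d.support, (d j) • w j) = m := by
    rw [← hp (by simpa [mem_support_iff] using hd), Finsupp.weight_apply, Finsupp.sum]
  have := h1.mul h2
  rw [hm, zero_add] at this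
  exact this

/-- The composition of two resonance polynomial self-maps of `ℝ^n`
is again a resonance polynomial self-map of `ℝ^n`. -/
theorem resonance_comp (n : ℕ) (hn : 1 ≤ n) (w : Fin n → ℝ) (hw : ∀ j, w j < 0)
    (P Q : Fin n → MvPolynomial (Fin n) ℝ)
    (hP0 : IsPolySelfMap P) (hP : ResonanceDefects w P)
    (hQ0 : IsPolySelfMap Q) (hQ : ResonanceDefects w Q) :
    IsPolySelfMap (polyComp P Q) ∧ ResonanceDefects w (polyComp P Q) := by
  rw [resonance_iff] at hP hQ
  have hcomp : ∀ i, (polyComp P Q i).IsWeightedHomogeneous w (w i) :=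
    fun i => whomog_bind₁ Q (hP i) hQ
  refine ⟨?_, (resonance_iff w _).2 hcomp⟩
  intro i
  by_contra h
  have : Finsupp.weight w (0 : Fin n →₀ ℕ) = w i := hcomp i (by simpa [constantCoeff_eq] using h)
  rw [map_zero] at this
  exact absurd this.symm (ne_of_lt (hw i))
end

section
/- If h is a subresonance polynomial self-map of ℝ^n and u ∈ ℝ^n, then the translated map x ↦ h(x + u) − h(u) is again (induced by) a subresonance polynomial self-map of ℝ^n. -/
open MvPolynomial

/-- The map `ℝ^n → ℝ^n` induced by an `n`-tuple of polynomials. -/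
noncomputable def evalMap {n : ℕ} (P : Fin n → MvPolynomial (Fin n) ℝ)
    (x : Fin n → ℝ) : Fin n → ℝ :=
  fun i => MvPolynomial.eval x (P i)

private lemma shift_pow_support {n : ℕ} (j : Fin n) (a : ℝ) (k : ℕ) :
    ∀ d' ∈ ((X j + C a : MvPolynomial (Fin n) ℝ) ^ k).support,
      d' ≤ Finsupp.single j k := by
  induction k with
  | zero =>
      intro d' hd'
      rw [pow_zero] at hd'
      simp only [MvPolynomial.mem_support_iff, MvPolynomial.coeff_one, ne_eq,
        ite_eq_right_iff, not_forall] at hd'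
      simp [hd'.1]
  | succ k ih =>
      intro d' hd'
      rw [pow_succ] at hd'
      obtain ⟨b, hb, c, hc, rfl⟩ := Finset.mem_add.mp (MvPolynomial.support_mul _ _ hd')
      have hb' : b ≤ Finsupp.single j k := ih b hb
      have hc' : c ≤ Finsupp.single j 1 := by
        rcases Finset.mem_union.mp (MvPolynomial.support_add hc) with hX | hC
        · have : c = Finsupp.single j 1 := by
            rw [MvPolynomial.support_X] at hX
            exact Finset.mem_singleton.mp hX
          exact this.le
        · have : c = 0 := by
            have := MvPolynomial.mem_support_iff.mp hC
            by_contra hne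
            simp only [MvPolynomial.coeff_C] at this
            exact this (if_neg (fun h0 => hne h0.symm))
          simp [this]
      calc b + c ≤ Finsupp.single j k + Finsupp.single j 1 := add_le_add hb' hc'
        _ = Finsupp.single j (k + 1) := (Finsupp.single_add j k 1).symm

private lemma shift_prod_support {n : ℕ} (u : Fin n → ℝ) (d : Fin n →₀ ℕ)
    (s : Finset (Fin n)) :
    ∀ d' ∈ (∏ j ∈ s, (X j + C (u j) : MvPolynomial (Fin n) ℝ) ^ d j).support,
      d' ≤ ∑ j ∈ s, Finsupp.single j (d j) := by
  classical
  induction s using Finset.induction_on with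
  | empty =>
      intro d' hd'
      simp only [Finset.prod_empty, MvPolynomial.mem_support_iff,
        MvPolynomial.coeff_one, ne_eq, ite_eq_right_iff, not_forall] at hd'
      simp [hd'.1]
  | @insert a s ha ih =>
      intro d' hd'
      rw [Finset.prod_insert ha] at hd'
      obtain ⟨b, hb, c, hc, rfl⟩ := Finset.mem_add.mp (MvPolynomial.support_mul _ _ hd')
      rw [Finset.sum_insert ha]
      exact add_le_add (shift_pow_support a (u a) (d a) b hb) (ih c hc)

private lemma shift_support {n : ℕ} (u : Fin n → ℝ) (p : MvPolynomial (Fin n) ℝ) :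
    ∀ d' ∈ (aeval (fun j => X j + C (u j)) p).support, ∃ d ∈ p.support, d' ≤ d := by
  classical
  intro d' hd'
  conv at hd' => rw [p.as_sum, map_sum]
  obtain ⟨d, hd, hmem⟩ := Finset.mem_biUnion.mp (MvPolynomial.support_sum hd')
  refine ⟨d, hd, ?_⟩
  rw [MvPolynomial.aeval_monomial] at hmem
  obtain ⟨b, hb, c, hc, rfl⟩ := Finset.mem_add.mp (MvPolynomial.support_mul _ _ hmem)
  have hb0 : b = 0 := by
    have := MvPolynomial.mem_support_iff.mp hb
    by_contra hne
    simp only [algebraMap_eq, MvPolynomial.coeff_C] at this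
    exact this (if_neg (fun h0 => hne h0.symm))
  have hprod : Finsupp.prod d (fun j e => (X j + C (u j) : MvPolynomial (Fin n) ℝ) ^ e)
      = ∏ j, (X j + C (u j) : MvPolynomial (Fin n) ℝ) ^ d j :=
    Finsupp.prod_fintype _ _ (fun j => pow_zero _)
  rw [hprod] at hc
  have hsum : (∑ j, Finsupp.single j (d j)) = d := by
    ext i
    rw [Finsupp.finset_sum_apply]
    simp [Finsupp.single_apply]
  have := shift_prod_support u d Finset.univ c hc
  rw [hsum] at this
  simpa [hb0] using this

/-- If `h` is a subresonance polynomial self-map of `ℝ^n` and `u ∈ ℝ^n`,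
then the translated map `x ↦ h(x + u) − h(u)` is again (induced by) a subresonance
polynomial self-map of `ℝ^n`. -/
theorem subresonance_translate (n : ℕ) (hn : 1 ≤ n) (w : Fin n → ℝ)
    (hw : ∀ j, w j < 0) (h : Fin n → MvPolynomial (Fin n) ℝ)
    (hh0 : IsPolySelfMap h) (hh : SubresonanceDefects w h) (u : Fin n → ℝ) :
    ∃ Q : Fin n → MvPolynomial (Fin n) ℝ,
      IsPolySelfMap Q ∧ SubresonanceDefects w Q ∧
      ∀ x : Fin n → ℝ, evalMap Q x = evalMap h (x + u) - evalMap h u := by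
  classical
  set f : Fin n → MvPolynomial (Fin n) ℝ := fun j => X j + C (u j) with hf
  have key : ∀ (x : Fin n → ℝ) (p : MvPolynomial (Fin n) ℝ),
      eval x (aeval f p) = eval (fun j => x j + u j) p := by
    intro x p
    induction p using MvPolynomial.induction_on with
    | C a => simp [hf]
    | add p q hp hq =>
        rw [map_add, map_add, hp, hq]
        exact (map_add _ p q).symm
    | mul_X p j hp =>
        rw [map_mul, map_mul, hp]
        simp [hf]
  refine ⟨fun i => aeval f (h i) - C (eval u (h i)), ?_, ?_, ?_⟩
  · intro i
    have h1 : constantCoeff (aeval f (h i)) = eval u (h i) := by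
      rw [← MvPolynomial.eval_zero, key 0 (h i)]
      simp
    rw [map_sub, h1, constantCoeff_C, sub_self]
  · intro i d hd
    have hd' : d ∈ (aeval f (h i)).support ∪ (C (eval u (h i)) : MvPolynomial (Fin n) ℝ).support := by
      have : d ∈ (aeval f (h i) + (-(C (eval u (h i))))).support := by
        simpa [sub_eq_add_neg] using hd
      rcases Finset.mem_union.mp (MvPolynomial.support_add this) with h1 | h1
      · exact Finset.mem_union_left _ h1
      · exact Finset.mem_union_right _ (by simpa using h1)
    rcases Finset.mem_union.mp hd' with h1 | h1
    · obtain ⟨d₀, hd₀, hle⟩ := shift_support u (h i) d h1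
      have hmono : ∑ j, (d₀ j : ℝ) * w j ≤ ∑ j, (d j : ℝ) * w j := by
        apply Finset.sum_le_sum
        intro j _
        have hj : (d j : ℝ) ≤ (d₀ j : ℝ) := Nat.cast_le.mpr (hle j)
        nlinarith [hw j]
      have : defect w i d ≤ defect w i d₀ := sub_le_sub_left hmono _
      exact this.trans (hh i d₀ hd₀)
    · have hd0 : d = 0 := by
        have := MvPolynomial.mem_support_iff.mp h1
        by_contra hne
        simp only [MvPolynomial.coeff_C] at this
        exact this (if_neg (fun h0 => hne h0.symm))
      rw [hd0]
      simp only [defect]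
      have : ∑ j, ((0 : Fin n →₀ ℕ) j : ℝ) * w j = 0 := by simp
      rw [this]
      simpa using (hw i).le
  · intro x
    funext i
    simp only [evalMap, Pi.sub_apply, map_sub, eval_C, key]
    rfl
end

section
/- Every subresonance polynomial self-map P of ℝ^n whose derivative at the origin (equivalently, whose linear part) is an invertible linear map is a bijection of ℝ^n, and its inverse is again (induced by) a subresonance polynomial self-map of ℝ^n. -/
open MvPolynomial

/-- The linear part (derivative at the origin) of a polynomial self-map,
as an `n × n` matrix. -/
noncomputable def linPart {n : ℕ} (P : Fin n → MvPolynomial (Fin n) ℝ) :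
    Matrix (Fin n) (Fin n) ℝ :=
  Matrix.of fun i j => MvPolynomial.coeff (Finsupp.single j 1) (P i)


namespace SubresAux

variable {n : ℕ}

/-- total degree of a multi-index -/
def mdeg (d : Fin n →₀ ℕ) : ℕ := ∑ j, d j

/-- weighted degree of a multi-index -/
noncomputable def wdeg (v : Fin n → ℝ) (d : Fin n →₀ ℕ) : ℝ := ∑ j, (d j : ℝ) * v j

lemma mdeg_add (d e : Fin n →₀ ℕ) : mdeg (d + e) = mdeg d + mdeg e := by
  simp [mdeg, Finsupp.add_apply, Finset.sum_add_distrib]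

lemma wdeg_add (v : Fin n → ℝ) (d e : Fin n →₀ ℕ) :
    wdeg v (d + e) = wdeg v d + wdeg v e := by
  simp [wdeg, Finsupp.add_apply, add_mul, Finset.sum_add_distrib]

lemma mdeg_single (j : Fin n) : mdeg (Finsupp.single j 1) = 1 := by
  simp [mdeg, Finsupp.single_apply]

lemma wdeg_single (v : Fin n → ℝ) (j : Fin n) : wdeg v (Finsupp.single j 1) = v j := by
  rw [wdeg, Finset.sum_eq_single j]
  · simp
  · intro b _ hb
    rw [Finsupp.single_eq_of_ne' (Ne.symm hb)]
    simp
  · simp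

/-- all monomials have total degree at least `k` -/
def MD (k : ℕ) (f : MvPolynomial (Fin n) ℝ) : Prop := ∀ d ∈ f.support, k ≤ mdeg d

/-- all monomials have weighted degree at most `c` -/
def WB (v : Fin n → ℝ) (c : ℝ) (f : MvPolynomial (Fin n) ℝ) : Prop :=
  ∀ d ∈ f.support, wdeg v d ≤ c

lemma MD_zero (k : ℕ) : MD k (0 : MvPolynomial (Fin n) ℝ) := by simp [MD]

lemma MD_mono {k k' : ℕ} {f : MvPolynomial (Fin n) ℝ} (h : MD k f) (hk : k' ≤ k) : MD k' f :=
  fun d hd => le_trans hk (h d hd)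

lemma MD_add {k : ℕ} {f g : MvPolynomial (Fin n) ℝ} (hf : MD k f) (hg : MD k g) :
    MD k (f + g) := by
  intro d hd
  rcases Finset.mem_union.mp (MvPolynomial.support_add hd) with h | h
  · exact hf d h
  · exact hg d h

lemma MD_neg {k : ℕ} {f : MvPolynomial (Fin n) ℝ} (hf : MD k f) : MD k (-f) := by
  intro d hd
  exact hf d (by simpa using hd)

lemma MD_sub {k : ℕ} {f g : MvPolynomial (Fin n) ℝ} (hf : MD k f) (hg : MD k g) :
    MD k (f - g) := by
  rw [sub_eq_add_neg]; exact MD_add hf (MD_neg hg)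

lemma MD_smul {k : ℕ} {c : ℝ} {f : MvPolynomial (Fin n) ℝ} (hf : MD k f) : MD k (c • f) :=
  fun d hd => hf d (MvPolynomial.support_smul hd)

lemma MD_mul {k l : ℕ} {f g : MvPolynomial (Fin n) ℝ} (hf : MD k f) (hg : MD l g) :
    MD (k + l) (f * g) := by
  intro d hd
  have := MvPolynomial.support_mul f g hd
  rcases Finset.mem_add.mp this with ⟨a, ha, b, hb, rfl⟩
  rw [mdeg_add]
  exact add_le_add (hf a ha) (hg b hb)

lemma MD_X (j : Fin n) : MD 1 (X j : MvPolynomial (Fin n) ℝ) := by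
  intro d hd
  rw [MvPolynomial.support_X] at hd
  simp only [Finset.mem_singleton] at hd
  simp [hd, mdeg_single]

lemma MD_pow {k : ℕ} {f : MvPolynomial (Fin n) ℝ} (hf : MD k f) (m : ℕ) :
    MD (m * k) (f ^ m) := by
  induction m with
  | zero =>
      rw [Nat.zero_mul, pow_zero]
      intro d hd
      exact Nat.zero_le _
  | succ m ih =>
      rw [pow_succ, Nat.succ_mul]
      exact MD_mul ih hf

lemma MD_sum {k : ℕ} {ι : Type*} (s : Finset ι) (F : ι → MvPolynomial (Fin n) ℝ)
    (h : ∀ i ∈ s, MD k (F i)) : MD k (∑ i ∈ s, F i) := by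
  classical
  induction s using Finset.induction_on with
  | empty => simpa using MD_zero k
  | insert _ _ hnot ih =>
      rw [Finset.sum_insert hnot]
      exact MD_add (h _ (Finset.mem_insert_self _ _))
        (ih fun i hi => h i (Finset.mem_insert_of_mem hi))

lemma MD_prod {ι : Type*} (s : Finset ι) (F : ι → MvPolynomial (Fin n) ℝ) (m : ι → ℕ)
    (h : ∀ i ∈ s, MD (m i) (F i)) : MD (∑ i ∈ s, m i) (∏ i ∈ s, F i) := by
  classical
  induction s using Finset.induction_on with
  | empty =>
      intro d hd
      have hd0 : d = 0 := by
        by_contra hne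
        have := MvPolynomial.mem_support_iff.mp hd
        have h0 : (0 : Fin n →₀ ℕ) ≠ d := Ne.symm hne
        simp [MvPolynomial.coeff_one, h0] at this
      subst hd0
      simp [mdeg]
  | insert _ _ hnot ih =>
      rw [Finset.sum_insert hnot, Finset.prod_insert hnot]
      exact MD_mul (h _ (Finset.mem_insert_self _ _))
        (ih fun i hi => h i (Finset.mem_insert_of_mem hi))

lemma WB_zero (v : Fin n → ℝ) (c : ℝ) : WB v c (0 : MvPolynomial (Fin n) ℝ) := by simp [WB]

lemma WB_mono {v : Fin n → ℝ} {c c' : ℝ} {f : MvPolynomial (Fin n) ℝ} (h : WB v c f)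
    (hc : c ≤ c') : WB v c' f := fun d hd => le_trans (h d hd) hc

lemma WB_add {v : Fin n → ℝ} {c : ℝ} {f g : MvPolynomial (Fin n) ℝ} (hf : WB v c f)
    (hg : WB v c g) : WB v c (f + g) := by
  intro d hd
  rcases Finset.mem_union.mp (MvPolynomial.support_add hd) with h | h
  · exact hf d h
  · exact hg d h

lemma WB_neg {v : Fin n → ℝ} {c : ℝ} {f : MvPolynomial (Fin n) ℝ} (hf : WB v c f) :
    WB v c (-f) := fun d hd => hf d (by simpa using hd)

lemma WB_sub {v : Fin n → ℝ} {c : ℝ} {f g : MvPolynomial (Fin n) ℝ} (hf : WB v c f)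
    (hg : WB v c g) : WB v c (f - g) := by
  rw [sub_eq_add_neg]; exact WB_add hf (WB_neg hg)

lemma WB_smul {v : Fin n → ℝ} {c : ℝ} {a : ℝ} {f : MvPolynomial (Fin n) ℝ} (hf : WB v c f) :
    WB v c (a • f) := fun d hd => hf d (MvPolynomial.support_smul hd)

lemma WB_mul {v : Fin n → ℝ} {c c' : ℝ} {f g : MvPolynomial (Fin n) ℝ} (hf : WB v c f)
    (hg : WB v c' g) : WB v (c + c') (f * g) := by
  intro d hd
  rcases Finset.mem_add.mp (MvPolynomial.support_mul f g hd) with ⟨a, ha, b, hb, rfl⟩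
  rw [wdeg_add]
  exact add_le_add (hf a ha) (hg b hb)

lemma WB_X (v : Fin n → ℝ) (j : Fin n) : WB v (v j) (X j : MvPolynomial (Fin n) ℝ) := by
  intro d hd
  rw [MvPolynomial.support_X] at hd
  simp only [Finset.mem_singleton] at hd
  simp [hd, wdeg_single]

lemma WB_pow {v : Fin n → ℝ} {c : ℝ} {f : MvPolynomial (Fin n) ℝ} (hf : WB v c f) (m : ℕ) :
    WB v (m * c) (f ^ m) := by
  induction m with
  | zero =>
      intro d hd
      have hd0 : d = 0 := by
        by_contra hne
        have := MvPolynomial.mem_support_iff.mp hd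
        have h0 : (0 : Fin n →₀ ℕ) ≠ d := Ne.symm hne
        simp [MvPolynomial.coeff_one, h0] at this
      subst hd0
      simp [wdeg]
  | succ m ih =>
      rw [pow_succ, show ((m + 1 : ℕ) : ℝ) * c = (m : ℝ) * c + c by push_cast; ring]
      exact WB_mul ih hf

lemma WB_sum {v : Fin n → ℝ} {c : ℝ} {ι : Type*} (s : Finset ι)
    (F : ι → MvPolynomial (Fin n) ℝ) (h : ∀ i ∈ s, WB v c (F i)) : WB v c (∑ i ∈ s, F i) := by
  classical
  induction s using Finset.induction_on with
  | empty => simpa using WB_zero v c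
  | insert _ _ hnot ih =>
      rw [Finset.sum_insert hnot]
      exact WB_add (h _ (Finset.mem_insert_self _ _))
        (ih fun i hi => h i (Finset.mem_insert_of_mem hi))

lemma WB_prod {v : Fin n → ℝ} {ι : Type*} (s : Finset ι) (F : ι → MvPolynomial (Fin n) ℝ)
    (c : ι → ℝ) (h : ∀ i ∈ s, WB v (c i) (F i)) : WB v (∑ i ∈ s, c i) (∏ i ∈ s, F i) := by
  classical
  induction s using Finset.induction_on with
  | empty =>
      intro d hd
      have hd0 : d = 0 := by
        by_contra hne
        have := MvPolynomial.mem_support_iff.mp hd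
        have h0 : (0 : Fin n →₀ ℕ) ≠ d := Ne.symm hne
        simp [MvPolynomial.coeff_one, h0] at this
      subst hd0
      simp [wdeg]
  | insert _ _ hnot ih =>
      rw [Finset.sum_insert hnot, Finset.prod_insert hnot]
      exact WB_mul (h _ (Finset.mem_insert_self _ _))
        (ih fun i hi => h i (Finset.mem_insert_of_mem hi))

/-- expansion of `bind₁` as a sum over the support -/
lemma bind₁_eq_sum (Q : Fin n → MvPolynomial (Fin n) ℝ) (f : MvPolynomial (Fin n) ℝ) :
    bind₁ Q f = ∑ e ∈ f.support, (coeff e f) • ∏ j, Q j ^ e j := by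
  conv_lhs => rw [← MvPolynomial.support_sum_monomial_coeff f]
  rw [map_sum]
  refine Finset.sum_congr rfl fun e _ => ?_
  rw [bind₁_monomial, MvPolynomial.smul_eq_C_mul]
  congr 1
  rw [← Finsupp.prod_pow]
  rfl

lemma MD_pi_prod {Q : Fin n → MvPolynomial (Fin n) ℝ} (hQ : ∀ j, MD 1 (Q j))
    (e : Fin n →₀ ℕ) : MD (mdeg e) (∏ j, Q j ^ e j) := by
  have := MD_prod Finset.univ (fun j => Q j ^ e j) (fun j => e j)
    (fun j _ => by simpa using MD_pow (hQ j) (e j))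
  simpa [mdeg] using this

lemma WB_pi_prod {v : Fin n → ℝ} {Q : Fin n → MvPolynomial (Fin n) ℝ}
    (hQ : ∀ j, WB v (v j) (Q j)) (e : Fin n →₀ ℕ) :
    WB v (wdeg v e) (∏ j, Q j ^ e j) := by
  have := WB_prod Finset.univ (fun j => Q j ^ e j) (fun j => (e j : ℝ) * v j)
    (fun j _ => WB_pow (hQ j) (e j))
  simpa [wdeg] using this

lemma MD_bind {m : ℕ} {Q : Fin n → MvPolynomial (Fin n) ℝ} {f : MvPolynomial (Fin n) ℝ}
    (hf : ∀ e ∈ f.support, m ≤ mdeg e) (hQ : ∀ j, MD 1 (Q j)) : MD m (bind₁ Q f) := by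
  rw [bind₁_eq_sum]
  exact MD_sum _ _ fun e he => MD_smul (MD_mono (MD_pi_prod hQ e) (hf e he))

lemma WB_bind {v : Fin n → ℝ} {c : ℝ} {Q : Fin n → MvPolynomial (Fin n) ℝ}
    {f : MvPolynomial (Fin n) ℝ} (hf : ∀ e ∈ f.support, wdeg v e ≤ c)
    (hQ : ∀ j, WB v (v j) (Q j)) : WB v c (bind₁ Q f) := by
  rw [bind₁_eq_sum]
  exact WB_sum _ _ fun e he => WB_smul (WB_mono (WB_pi_prod hQ e) (hf e he))

lemma MD_pow_sub {k : ℕ} {q q' : MvPolynomial (Fin n) ℝ} (hq : MD 1 q) (hq' : MD 1 q')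
    (h : MD k (q - q')) (hk : 1 ≤ k) (m : ℕ) : MD (k - 1 + m) (q ^ m - q' ^ m) := by
  induction m with
  | zero => simpa using MD_zero (k - 1 + 0)
  | succ m ih =>
      have key : q ^ (m + 1) - q' ^ (m + 1)
          = (q - q') * q ^ m + q' * (q ^ m - q' ^ m) := by ring
      rw [key]
      refine MD_add (MD_mono (MD_mul h (MD_pow hq m)) (by omega))
        (MD_mono (MD_mul hq' ih) (by omega))

lemma MD_prod_sub {kk : ℕ} {ι : Type*} (s : Finset ι) (F G : ι → MvPolynomial (Fin n) ℝ)
    (m : ι → ℕ) (hF : ∀ i ∈ s, MD (m i) (F i)) (hG : ∀ i ∈ s, MD (m i) (G i))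
    (hd : ∀ i ∈ s, MD (kk + m i) (F i - G i)) :
    MD (kk + ∑ i ∈ s, m i) (∏ i ∈ s, F i - ∏ i ∈ s, G i) := by
  classical
  induction s using Finset.induction_on with
  | empty => simpa using MD_zero _
  | @insert a s hnot ih =>
      rw [Finset.prod_insert hnot, Finset.prod_insert hnot, Finset.sum_insert hnot]
      have key : F a * ∏ i ∈ s, F i - G a * ∏ i ∈ s, G i
          = (F a - G a) * ∏ i ∈ s, F i + G a * (∏ i ∈ s, F i - ∏ i ∈ s, G i) := by ring
      rw [key]
      refine MD_add (MD_mono (MD_mul (hd _ (Finset.mem_insert_self _ _))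
          (MD_prod s F m fun i hi => hF i (Finset.mem_insert_of_mem hi))) (by omega)) ?_
      refine MD_mono (MD_mul (hG _ (Finset.mem_insert_self _ _))
        (ih (fun i hi => hF i (Finset.mem_insert_of_mem hi))
            (fun i hi => hG i (Finset.mem_insert_of_mem hi))
            (fun i hi => hd i (Finset.mem_insert_of_mem hi)))) (by omega)

lemma MD_bind_sub {k : ℕ} {Q Q' : Fin n → MvPolynomial (Fin n) ℝ}
    {f : MvPolynomial (Fin n) ℝ} (hf : ∀ e ∈ f.support, 2 ≤ mdeg e)
    (hQ : ∀ j, MD 1 (Q j)) (hQ' : ∀ j, MD 1 (Q' j))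
    (hd : ∀ j, MD k (Q j - Q' j)) (hk : 1 ≤ k) :
    MD (k + 1) (bind₁ Q f - bind₁ Q' f) := by
  rw [bind₁_eq_sum, bind₁_eq_sum, ← Finset.sum_sub_distrib]
  refine MD_sum _ _ fun e he => ?_
  rw [← smul_sub]
  refine MD_smul ?_
  have := MD_prod_sub (kk := k - 1) Finset.univ (fun j => Q j ^ e j) (fun j => Q' j ^ e j)
    (fun j => e j) (fun j _ => by simpa using MD_pow (hQ j) (e j))
    (fun j _ => by simpa using MD_pow (hQ' j) (e j))
    (fun j _ => MD_pow_sub (hQ j) (hQ' j) (hd j) hk (e j))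
  have h2 := hf e he
  have this2 : MD (k - 1 + mdeg e) (∏ j, Q j ^ e j - ∏ j, Q' j ^ e j) := this
  exact MD_mono this2 (by omega)



/-- The linear part as a tuple of polynomials. -/
noncomputable def linT (L : Matrix (Fin n) (Fin n) ℝ) : Fin n → MvPolynomial (Fin n) ℝ :=
  fun i => ∑ j, L i j • X j

/-- The higher-order remainder. -/
noncomputable def rem (P : Fin n → MvPolynomial (Fin n) ℝ) (L : Matrix (Fin n) (Fin n) ℝ) :
    Fin n → MvPolynomial (Fin n) ℝ := fun i => P i - linT L i

/-- One step of the inversion iteration. -/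
noncomputable def phi (A : Matrix (Fin n) (Fin n) ℝ) (R : Fin n → MvPolynomial (Fin n) ℝ)
    (Q : Fin n → MvPolynomial (Fin n) ℝ) : Fin n → MvPolynomial (Fin n) ℝ :=
  fun i => ∑ j, A i j • ((X j : MvPolynomial (Fin n) ℝ) - bind₁ Q (R j))

lemma coeff_single_linT (L : Matrix (Fin n) (Fin n) ℝ) (i k : Fin n) :
    coeff (Finsupp.single k 1) (linT L i) = L i k := by
  rw [linT, MvPolynomial.coeff_sum, Finset.sum_eq_single k]
  · simp [MvPolynomial.coeff_smul]
  · intro b _ hbk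
    have hne : ¬(Finsupp.single b (1:ℕ) = Finsupp.single k 1) := by
      rw [Finsupp.single_left_inj (one_ne_zero)]
      exact hbk
    simp [MvPolynomial.coeff_smul, MvPolynomial.coeff_X', hne]
  · simp

lemma mdeg_eq_zero {d : Fin n →₀ ℕ} (h : mdeg d = 0) : d = 0 := by
  rw [mdeg, Finset.sum_eq_zero_iff] at h
  ext j
  exact h j (Finset.mem_univ j)

lemma mdeg_eq_one {e : Fin n →₀ ℕ} (h : mdeg e = 1) : ∃ k, e = Finsupp.single k 1 := by
  have hex : ∃ k, e k ≠ 0 := by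
    by_contra hc
    push_neg at hc
    rw [mdeg, Finset.sum_eq_zero (fun j _ => hc j)] at h
    omega
  obtain ⟨k, hk⟩ := hex
  have hsplit : e k + ∑ j ∈ Finset.univ.erase k, e j = mdeg e :=
    Finset.add_sum_erase _ _ (Finset.mem_univ k)
  have hk1 : e k = 1 := by omega
  have hrest : ∑ j ∈ Finset.univ.erase k, e j = 0 := by omega
  rw [Finset.sum_eq_zero_iff] at hrest
  refine ⟨k, ?_⟩
  ext j
  rcases eq_or_ne j k with rfl | hne
  · simp [hk1]
  · rw [Finsupp.single_eq_of_ne' (Ne.symm hne)]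
    exact hrest j (Finset.mem_erase.mpr ⟨hne, Finset.mem_univ j⟩)




set_option maxHeartbeats 2000000 in
lemma key (hn : 1 ≤ n) (v : Fin n → ℝ) (hv : ∀ j, 0 < v j)
    (P : Fin n → MvPolynomial (Fin n) ℝ)
    (h1 : ∀ i, MD 1 (P i)) (hW : ∀ i, WB v (v i) (P i))
    (A : Matrix (Fin n) (Fin n) ℝ)
    (hA : ∀ i j, A i j ≠ 0 → v j ≤ v i)
    (hLA : linPart P * A = 1) :
    ∃ Q : Fin n → MvPolynomial (Fin n) ℝ,
      (∀ i, MD 1 (Q i)) ∧ (∀ i, WB v (v i) (Q i)) ∧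
      (∀ i, bind₁ Q (P i) = X i) ∧ linPart Q = A := by
  haveI : Nonempty (Fin n) := ⟨⟨0, hn⟩⟩
  set L : Matrix (Fin n) (Fin n) ℝ := linPart P with hLdef
  set R : Fin n → MvPolynomial (Fin n) ℝ := rem P L with hRdef
  have hLcoeff : ∀ i j, L i j = coeff (Finsupp.single j 1) (P i) := fun i j => by rw [hLdef]; rfl
  -- weighted bound for the linear part
  have hWlin : ∀ i, WB v (v i) (linT L i) := by
    intro i
    refine WB_sum _ _ fun j _ => ?_
    by_cases h : L i j = 0
    · rw [h, zero_smul]; exact WB_zero v _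
    · have hmem : Finsupp.single j 1 ∈ (P i).support :=
        MvPolynomial.mem_support_iff.mpr (by rw [← hLcoeff]; exact h)
      have := hW i _ hmem
      rw [wdeg_single] at this
      exact WB_smul (WB_mono (WB_X v j) this)
  have hMDlin : ∀ i, MD 1 (linT L i) :=
    fun i => MD_sum _ _ fun j _ => MD_smul (MD_X j)
  have hWR : ∀ i, WB v (v i) (R i) := fun i => WB_sub (hW i) (hWlin i)
  have hMDR : ∀ i, MD 1 (R i) := fun i => MD_sub (h1 i) (hMDlin i)
  have hR2 : ∀ i, ∀ e ∈ (R i).support, 2 ≤ mdeg e := by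
    intro i e he
    by_contra hcon
    push_neg at hcon
    have h1e : 1 ≤ mdeg e := hMDR i e he
    have hone : mdeg e = 1 := by omega
    obtain ⟨k, rfl⟩ := mdeg_eq_one hone
    have : coeff (Finsupp.single k 1) (R i) = 0 := by
      rw [hRdef]
      show coeff _ (P i - linT L i) = 0
      rw [MvPolynomial.coeff_sub, coeff_single_linT, ← hLcoeff, sub_self]
    exact MvPolynomial.mem_support_iff.mp he this
  -- the iteration preserves goodness
  have hgood : ∀ Q : Fin n → MvPolynomial (Fin n) ℝ,
      (∀ j, MD 1 (Q j)) → (∀ j, WB v (v j) (Q j)) →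
      (∀ i, MD 1 (phi A R Q i)) ∧ (∀ i, WB v (v i) (phi A R Q i)) := by
    intro Q hQ1 hQW
    constructor
    · intro i
      refine MD_sum _ _ fun j _ => MD_smul (MD_sub (MD_X j) ?_)
      exact MD_bind (fun e he => le_trans (by norm_num) (hR2 j e he)) hQ1
    · intro i
      refine WB_sum _ _ fun j _ => ?_
      by_cases h : A i j = 0
      · rw [h, zero_smul]; exact WB_zero v _
      · have hji : v j ≤ v i := hA i j h
        exact WB_smul (WB_sub (WB_mono (WB_X v j) hji)
          (WB_mono (WB_bind (hWR j) hQW) hji))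
  -- contraction step
  have hstep : ∀ (Q Q' : Fin n → MvPolynomial (Fin n) ℝ) (k : ℕ), 1 ≤ k →
      (∀ j, MD 1 (Q j)) → (∀ j, MD 1 (Q' j)) → (∀ j, MD k (Q j - Q' j)) →
      ∀ i, MD (k + 1) (phi A R Q i - phi A R Q' i) := by
    intro Q Q' k hk hQ hQ' hd i
    have hrw : phi A R Q i - phi A R Q' i
        = ∑ j, A i j • (bind₁ Q' (R j) - bind₁ Q (R j)) := by
      rw [phi, phi, ← Finset.sum_sub_distrib]
      refine Finset.sum_congr rfl fun j _ => ?_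
      rw [← smul_sub]
      congr 1
      ring
    rw [hrw]
    refine MD_sum _ _ fun j _ => MD_smul ?_
    refine MD_bind_sub (hR2 j) hQ' hQ (fun j' => ?_) hk
    have := MD_neg (hd j')
    rwa [neg_sub] at this
  -- the iteration sequence
  set Qs : ℕ → Fin n → MvPolynomial (Fin n) ℝ :=
    fun k => (phi A R)^[k] (fun _ => 0) with hQsdef
  have hQs_succ : ∀ k, Qs (k + 1) = phi A R (Qs k) := by
    intro k
    rw [hQsdef]
    exact Function.iterate_succ_apply' _ _ _
  have hQs_good : ∀ k, (∀ j, MD 1 (Qs k j)) ∧ (∀ j, WB v (v j) (Qs k j)) := by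
    intro k
    induction k with
    | zero =>
        constructor
        · intro j d hd; simp [hQsdef] at hd
        · intro j d hd; simp [hQsdef] at hd
    | succ k ih =>
        rw [hQs_succ k]
        exact hgood _ ih.1 ih.2
  have hQs_diff : ∀ k, ∀ i, MD (k + 1) (Qs (k + 1) i - Qs k i) := by
    intro k
    induction k with
    | zero =>
        intro i
        have h0 : Qs 0 i = 0 := by simp [hQsdef]
        rw [h0, sub_zero]
        exact (hQs_good 1).1 i
    | succ k ih =>
        intro i
        rw [hQs_succ (k + 1)]
        rw [show Qs (k + 1) i = phi A R (Qs k) i by rw [hQs_succ k]]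
        exact hstep (Qs (k + 1)) (Qs k) (k + 1) (by omega) ((hQs_good (k+1)).1)
          ((hQs_good k).1) ih i
  -- degree bound
  obtain ⟨j0, -, hj0⟩ := Finset.exists_min_image Finset.univ v Finset.univ_nonempty
  obtain ⟨i0, -, hi0⟩ := Finset.exists_max_image Finset.univ v Finset.univ_nonempty
  set D : ℕ := Nat.ceil (v i0 / v j0) with hDdef
  have hbound : ∀ Q : Fin n → MvPolynomial (Fin n) ℝ, (∀ i, WB v (v i) (Q i)) →
      ∀ i, ∀ d ∈ (Q i).support, mdeg d ≤ D := by
    intro Q hQ i d hd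
    have h1' : (mdeg d : ℝ) * v j0 ≤ wdeg v d := by
      rw [mdeg, wdeg]
      push_cast
      rw [Finset.sum_mul]
      exact Finset.sum_le_sum fun j _ =>
        mul_le_mul_of_nonneg_left (hj0 j (Finset.mem_univ j)) (Nat.cast_nonneg _)
    have h2' : wdeg v d ≤ v i := hQ i d hd
    have h3' : v i ≤ v i0 := hi0 i (Finset.mem_univ i)
    have h4' : (mdeg d : ℝ) ≤ v i0 / v j0 := by
      rw [le_div_iff₀ (hv j0)]
      linarith
    have h5' : (mdeg d : ℝ) ≤ (D : ℝ) := le_trans h4' (Nat.le_ceil _)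
    exact_mod_cast h5'
  -- stabilization
  set Q : Fin n → MvPolynomial (Fin n) ℝ := Qs (D + 1) with hQdef
  have hfix : phi A R Q = Q := by
    rw [hQdef, ← hQs_succ (D + 1)]
    funext i
    rw [← sub_eq_zero]
    by_contra hne
    obtain ⟨d, hd⟩ := (MvPolynomial.support_nonempty.mpr hne)
    have hge : D + 2 ≤ mdeg d := hQs_diff (D + 1) i d hd
    have hmem := MvPolynomial.support_sub _ _ _ hd
    rcases Finset.mem_union.mp hmem with h | h
    · have := hbound _ (hQs_good (D + 2)).2 i d h
      omega
    · have := hbound _ (hQs_good (D + 1)).2 i d h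
      omega
  have hQ1 : ∀ j, MD 1 (Q j) := (hQs_good (D + 1)).1
  have hQW : ∀ j, WB v (v j) (Q j) := (hQs_good (D + 1)).2
  have hQeq : ∀ j, Q j = ∑ k, A j k • ((X k : MvPolynomial (Fin n) ℝ) - bind₁ Q (R k)) := by
    intro j
    conv_lhs => rw [← hfix]
    rfl
  -- inversion identity
  have hinv : ∀ i, bind₁ Q (P i) = X i := by
    intro i
    have hPi : P i = linT L i + R i := by
      rw [hRdef]
      show P i = linT L i + (P i - linT L i)
      ring
    rw [hPi, map_add]
    have hblin : bind₁ Q (linT L i) = ∑ j, L i j • Q j := by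
      rw [linT, map_sum]
      refine Finset.sum_congr rfl fun j _ => ?_
      rw [map_smul, bind₁_X_right]
    rw [hblin]
    have hsum : ∑ j, L i j • Q j
        = X i - bind₁ Q (R i) := by
      calc ∑ j, L i j • Q j
          = ∑ j, ∑ k, (L i j * A j k) • ((X k : MvPolynomial (Fin n) ℝ) - bind₁ Q (R k)) := by
            refine Finset.sum_congr rfl fun j _ => ?_
            rw [hQeq j, Finset.smul_sum]
            refine Finset.sum_congr rfl fun k _ => ?_
            rw [smul_smul]
        _ = ∑ k, (∑ j, L i j * A j k) • ((X k : MvPolynomial (Fin n) ℝ) - bind₁ Q (R k)) := by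
            rw [Finset.sum_comm]
            refine Finset.sum_congr rfl fun k _ => ?_
            rw [Finset.sum_smul]
        _ = ∑ k, ((1 : Matrix (Fin n) (Fin n) ℝ) i k) • ((X k : MvPolynomial (Fin n) ℝ) - bind₁ Q (R k)) := by
            refine Finset.sum_congr rfl fun k _ => ?_
            rw [← Matrix.mul_apply, hLA]
        _ = X i - bind₁ Q (R i) := by
            rw [Finset.sum_eq_single i]
            · rw [Matrix.one_apply_eq, one_smul]
            · intro b _ hbi
              rw [Matrix.one_apply_ne (Ne.symm hbi), zero_smul]
            · simp
    rw [hsum]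
    ring
  -- linear part of the inverse
  have hlinQ : linPart Q = A := by
    ext i k
    show coeff (Finsupp.single k 1) (Q i) = A i k
    have hb0 : ∀ j, coeff (Finsupp.single k 1) (bind₁ Q (R j)) = 0 := by
      intro j
      by_contra h
      have := MD_bind (m := 2) (hR2 j) hQ1 _ (MvPolynomial.mem_support_iff.mpr h)
      rw [mdeg_single] at this
      omega
    rw [hQeq i, MvPolynomial.coeff_sum]
    rw [Finset.sum_eq_single k]
    · rw [MvPolynomial.coeff_smul, MvPolynomial.coeff_sub, hb0, MvPolynomial.coeff_X, sub_zero]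
      simp
    · intro b _ hbk
      have hne : ¬(Finsupp.single b (1:ℕ) = Finsupp.single k 1) := by
        rw [Finsupp.single_left_inj (one_ne_zero)]
        exact hbk
      rw [MvPolynomial.coeff_smul, MvPolynomial.coeff_sub, hb0, MvPolynomial.coeff_X', if_neg hne,
        sub_zero]
      simp
    · simp
  exact ⟨Q, hQ1, hQW, hinv, hlinQ⟩



end SubresAux


/-- Every subresonance polynomial self-map `P` of `ℝ^n` whose linear part
is invertible is a bijection of `ℝ^n`, and its inverse is again (induced by) a
subresonance polynomial self-map of `ℝ^n`. -/
theorem subresonance_inverse (n : ℕ) (hn : 1 ≤ n) (w : Fin n → ℝ)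
    (hw : ∀ j, w j < 0) (P : Fin n → MvPolynomial (Fin n) ℝ)
    (hP0 : IsPolySelfMap P) (hP : SubresonanceDefects w P)
    (hlin : IsUnit (linPart P).det) :
    Function.Bijective (evalMap P) ∧
    ∃ Q : Fin n → MvPolynomial (Fin n) ℝ,
      IsPolySelfMap Q ∧ SubresonanceDefects w Q ∧
      Function.LeftInverse (evalMap Q) (evalMap P) ∧
      Function.RightInverse (evalMap Q) (evalMap P) := by
  haveI : Nonempty (Fin n) := ⟨⟨0, hn⟩⟩
  set v : Fin n → ℝ := fun j => -w j with hvdef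
  have hv : ∀ j, 0 < v j := fun j => by
    have := hw j
    simp only [hvdef]
    linarith
  have hvw : ∀ d : Fin n →₀ ℕ, SubresAux.wdeg v d = -SubresAux.wdeg w d := by
    intro d
    rw [SubresAux.wdeg, SubresAux.wdeg, ← Finset.sum_neg_distrib]
    refine Finset.sum_congr rfl fun j _ => ?_
    show (d j : ℝ) * v j = -((d j : ℝ) * w j)
    simp only [hvdef]
    ring
  have hdefect : ∀ i d, defect w i d = w i - SubresAux.wdeg w d := fun i d => rfl
  -- MD 1 for P
  have h1 : ∀ i, SubresAux.MD 1 (P i) := by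
    intro i d hd
    by_contra hc
    push_neg at hc
    have h0 : SubresAux.mdeg d = 0 := by omega
    have hd0 := SubresAux.mdeg_eq_zero h0
    subst hd0
    have hcc := hP0 i
    rw [MvPolynomial.constantCoeff_eq] at hcc
    exact MvPolynomial.mem_support_iff.mp hd hcc
  -- weighted bound for P
  have hWB : ∀ i, SubresAux.WB v (v i) (P i) := by
    intro i d hd
    have h2 := hP i d hd
    rw [hdefect] at h2
    rw [hvw d]
    show -SubresAux.wdeg w d ≤ -w i
    linarith
  -- block triangularity of the linear part and its inverse
  have hlinc : ∀ i j, linPart P i j = coeff (Finsupp.single j 1) (P i) := fun i j => rfl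
  have hLgood : ∀ i j, linPart P i j ≠ 0 → v j ≤ v i := by
    intro i j h
    have hmem : Finsupp.single j 1 ∈ (P i).support :=
      MvPolynomial.mem_support_iff.mpr (by rw [← hlinc]; exact h)
    have := hWB i _ hmem
    rwa [SubresAux.wdeg_single] at this
  have hbt : (linPart P).BlockTriangular w := by
    intro i j hij
    by_contra hne
    have := hLgood i j hne
    simp only [hvdef] at this
    linarith
  haveI := (linPart P).invertibleOfIsUnitDet hlin
  have hAbt : (linPart P)⁻¹.BlockTriangular w :=
    Matrix.blockTriangular_inv_of_blockTriangular hbt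
  have hA : ∀ i j, (linPart P)⁻¹ i j ≠ 0 → v j ≤ v i := by
    intro i j h
    by_contra hc
    push_neg at hc
    have hwj : w j < w i := by
      simp only [hvdef] at hc
      linarith
    exact h (hAbt hwj)
  obtain ⟨Q, hQ1, hQW, hQinv, hQlin⟩ :=
    SubresAux.key hn v hv P h1 hWB (linPart P)⁻¹ hA (Matrix.mul_nonsing_inv _ hlin)
  have hLA' : linPart Q * linPart P = 1 := by
    rw [hQlin]
    exact Matrix.nonsing_inv_mul _ hlin
  obtain ⟨Q', hQ'1, hQ'W, hQ'inv, hQ'lin⟩ :=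
    SubresAux.key hn v hv Q hQ1 hQW (linPart P) hLgood hLA'
  -- evaluation of composed maps
  have hcomp : ∀ (F G : Fin n → MvPolynomial (Fin n) ℝ), (∀ i, bind₁ G (F i) = X i) →
      ∀ x, evalMap F (evalMap G x) = x := by
    intro F G h x
    funext i
    have h2 : eval x (bind₁ G (F i)) = eval x (X i) := by rw [h i]
    rw [MvPolynomial.eval_X] at h2
    have h3 : eval x (bind₁ G (F i)) = eval (fun j => eval x (G j)) (F i) :=
      eval₂Hom_bind₁ (RingHom.id ℝ) x G (F i)
    rw [h3] at h2
    exact h2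
  have hfg : ∀ x, evalMap P (evalMap Q x) = x := hcomp P Q hQinv
  have hgg' : ∀ x, evalMap Q (evalMap Q' x) = x := hcomp Q Q' hQ'inv
  have hPQ' : ∀ x, evalMap P x = evalMap Q' x := by
    intro x
    conv_lhs => rw [← hgg' x]
    exact hfg (evalMap Q' x)
  have hleft : Function.LeftInverse (evalMap Q) (evalMap P) := by
    intro x
    rw [hPQ' x]
    exact hgg' x
  have hright : Function.RightInverse (evalMap Q) (evalMap P) := fun x => hfg x
  refine ⟨⟨hleft.injective, hright.surjective⟩, Q, ?_, ?_, hleft, hright⟩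
  · intro i
    rw [MvPolynomial.constantCoeff_eq]
    by_contra h
    have := hQ1 i 0 (MvPolynomial.mem_support_iff.mpr h)
    simp [SubresAux.mdeg] at this
  · intro i d hd
    have := hQW i d hd
    rw [hvw d] at this
    rw [hdefect]
    have h2 : -SubresAux.wdeg w d ≤ -w i := this
    linarith
end

section
/- If P is a resonance polynomial self-map of ℝ^n whose linear part is invertible, then P is a bijection of ℝ^n and its inverse is (induced by) a resonance polynomial self-map of ℝ^n. -/
open MvPolynomial

namespace ResAux

variable {n : ℕ}

lemma weight_eq_sum (w : Fin n → ℝ) (d : Fin n →₀ ℕ) :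
    (Finsupp.weight w d : ℝ) = ∑ j, (d j : ℝ) * w j := by
  rw [Finsupp.weight_apply, Finsupp.sum_fintype]
  · exact Finset.sum_congr rfl fun j _ => by rw [nsmul_eq_mul]
  · intro j; simp

lemma defect_eq (w : Fin n → ℝ) (i : Fin n) (d : Fin n →₀ ℕ) :
    defect w i d = w i - Finsupp.weight w d := by
  rw [defect, weight_eq_sum]

/-- rank of a coordinate: number of weight values strictly above it -/
noncomputable def rnk (w : Fin n → ℝ) (i : Fin n) : ℕ :=
  ((Finset.univ.image w).filter (fun v => w i < v)).card

lemma rnk_lt {w : Fin n → ℝ} {i k : Fin n} (h : w i < w k) : rnk w k < rnk w i := by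
  apply Finset.card_lt_card
  rw [Finset.ssubset_iff_of_subset]
  · exact ⟨w k, by simp [Finset.mem_filter, h], by simp⟩
  · intro v hv
    simp only [Finset.mem_filter] at hv ⊢
    exact ⟨hv.1, h.trans hv.2⟩

lemma rnk_eq {w : Fin n → ℝ} {i j : Fin n} (h : w i = w j) : rnk w i = rnk w j := by
  unfold rnk; rw [h]

lemma rnk_lt_card (w : Fin n → ℝ) (i : Fin n) : rnk w i < n := by
  have h1 : ((Finset.univ.image w).filter (fun v => w i < v)) ⊆
      (Finset.univ.image w).erase (w i) := by
    intro v hv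
    simp only [Finset.mem_filter] at hv
    exact Finset.mem_erase.mpr ⟨(hv.2).ne', hv.1⟩
  have h2 : rnk w i ≤ ((Finset.univ.image w).erase (w i)).card := Finset.card_le_card h1
  have h3 : w i ∈ Finset.univ.image w := Finset.mem_image_of_mem w (Finset.mem_univ i)
  have h4 := Finset.card_erase_of_mem h3
  have h5 : (Finset.univ.image w).card ≤ n := by
    simpa using Finset.card_image_le (s := (Finset.univ : Finset (Fin n))) (f := w)
  have h6 : 0 < (Finset.univ.image w).card := Finset.card_pos.mpr ⟨w i, h3⟩
  omega

lemma eval_congr_support (p : MvPolynomial (Fin n) ℝ) (x y : Fin n → ℝ)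
    (h : ∀ d ∈ p.support, ∀ k, d k ≠ 0 → x k = y k) : eval x p = eval y p := by
  rw [eval_eq, eval_eq]
  refine Finset.sum_congr rfl fun d hd => ?_
  congr 1
  exact Finset.prod_congr rfl fun k hk => by
    rw [h d hd k (Finsupp.mem_support_iff.mp hk)]

lemma isWeightedHomogeneous_pow {w : Fin n → ℝ} {p : MvPolynomial (Fin n) ℝ} {m : ℝ}
    (hp : p.IsWeightedHomogeneous w m) (k : ℕ) :
    (p ^ k).IsWeightedHomogeneous w (k • m) := by
  induction k with
  | zero => simpa using isWeightedHomogeneous_one (R := ℝ) w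
  | succ k ih =>
      rw [pow_succ, succ_nsmul]
      exact ih.mul hp

lemma isWeightedHomogeneous_neg {w : Fin n → ℝ} {p : MvPolynomial (Fin n) ℝ} {m : ℝ}
    (hp : p.IsWeightedHomogeneous w m) : (-p).IsWeightedHomogeneous w m := by
  intro d hd
  exact hp (by simpa using hd)

lemma isWeightedHomogeneous_sub {w : Fin n → ℝ} {p q : MvPolynomial (Fin n) ℝ} {m : ℝ}
    (hp : p.IsWeightedHomogeneous w m) (hq : q.IsWeightedHomogeneous w m) :
    (p - q).IsWeightedHomogeneous w m := by
  rw [sub_eq_add_neg]; exact hp.add (isWeightedHomogeneous_neg hq)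

lemma bind₁_isWeightedHomogeneous {w : Fin n → ℝ} {G : Fin n → MvPolynomial (Fin n) ℝ}
    (hG : ∀ j, (G j).IsWeightedHomogeneous w (w j)) {p : MvPolynomial (Fin n) ℝ} {m : ℝ}
    (hp : p.IsWeightedHomogeneous w m) : (bind₁ G p).IsWeightedHomogeneous w m := by
  nth_rewrite 1 [p.as_sum]
  rw [map_sum]
  apply IsWeightedHomogeneous.sum
  intro d hd
  rw [bind₁_monomial]
  have h1 : IsWeightedHomogeneous w (∏ i ∈ d.support, G i ^ d i)
      (∑ i ∈ d.support, d i • w i) :=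
    IsWeightedHomogeneous.prod _ _ _ fun i _ => isWeightedHomogeneous_pow (hG i) (d i)
  have h2 := (isWeightedHomogeneous_C w (coeff d p)).mul h1
  have h3 : (0 : ℝ) + ∑ i ∈ d.support, d i • w i = m := by
    rw [zero_add]
    have := hp (mem_support_iff.mp hd)
    rw [Finsupp.weight_apply] at this
    exact this
  rwa [h3] at h2


section Main

variable {n : ℕ} (P : Fin n → MvPolynomial (Fin n) ℝ)

/-- the linear part as a tuple of polynomials -/
noncomputable def linTerm (i : Fin n) : MvPolynomial (Fin n) ℝ :=
  ∑ k, C (linPart P i k) * X k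

/-- the nonlinear part -/
noncomputable def NP (i : Fin n) : MvPolynomial (Fin n) ℝ := P i - linTerm P i

/-- iterative approximations of the inverse -/
noncomputable def Qseq : ℕ → Fin n → MvPolynomial (Fin n) ℝ
  | 0 => fun i => ∑ j, C ((linPart P)⁻¹ i j) * X j
  | (m + 1) => fun i => ∑ j, C ((linPart P)⁻¹ i j) * (X j - bind₁ (Qseq m) (NP P j))

lemma eval_linTerm (x : Fin n → ℝ) (i : Fin n) :
    eval x (linTerm P i) = ∑ k, linPart P i k * x k := by
  simp [linTerm]

lemma eval_P (x : Fin n → ℝ) (i : Fin n) :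
    eval x (P i) = (∑ k, linPart P i k * x k) + eval x (NP P i) := by
  have h : P i = linTerm P i + NP P i := by rw [NP]; ring
  rw [← eval_linTerm, ← map_add, ← h]

lemma eval_Q0 (y : Fin n → ℝ) (i : Fin n) :
    eval y (Qseq P 0 i) = ∑ j, (linPart P)⁻¹ i j * y j := by
  simp [Qseq]

lemma eval_Qsucc (m : ℕ) (y : Fin n → ℝ) (i : Fin n) :
    eval y (Qseq P (m + 1) i) =
      ∑ j, (linPart P)⁻¹ i j *
        (y j - eval (fun k => eval y (Qseq P m k)) (NP P j)) := by
  simp only [Qseq, map_sum, map_mul, map_sub, eval_C, eval_X]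
  refine Finset.sum_congr rfl fun j _ => ?_
  congr 1
  rw [sub_right_inj]
  exact eval₂Hom_bind₁ _ _ _ _

variable {w : Fin n → ℝ}

lemma Lblock (hP : ResonanceDefects w P) {i j : Fin n} (h : linPart P i j ≠ 0) :
    w i = w j := by
  have hs : Finsupp.single j 1 ∈ (P i).support := mem_support_iff.mpr h
  have := hP i _ hs
  rw [defect_eq, sub_eq_zero] at this
  rw [this]
  simp [Finsupp.weight_apply, Finsupp.sum_single_index]

lemma Linv_block (hP : ResonanceDefects w P) (hlin : IsUnit (linPart P).det)
    {i j : Fin n} (h : w i ≠ w j) : (linPart P)⁻¹ i j = 0 := by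
  classical
  set L := linPart P with hL
  set D : Matrix (Fin n) (Fin n) ℝ :=
    Matrix.diagonal (fun k => if w k = w j then (1 : ℝ) else 0) with hD
  have hcomm : L * D = D * L := by
    ext a b
    rw [Matrix.mul_diagonal, Matrix.diagonal_mul]
    by_cases hab : L a b = 0
    · simp [hab]
    · have := Lblock P hP hab
      rw [this, mul_comm]
  have h1 : L * L⁻¹ = 1 := Matrix.mul_nonsing_inv _ hlin
  have h2 : L⁻¹ * L = 1 := Matrix.nonsing_inv_mul _ hlin
  have hcomm' : L⁻¹ * D = D * L⁻¹ := by
    calc L⁻¹ * D = L⁻¹ * D * (L * L⁻¹) := by rw [h1, mul_one]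
    _ = L⁻¹ * (D * L) * L⁻¹ := by noncomm_ring
    _ = L⁻¹ * (L * D) * L⁻¹ := by rw [hcomm]
    _ = (L⁻¹ * L) * (D * L⁻¹) := by noncomm_ring
    _ = D * L⁻¹ := by rw [h2, one_mul]
  have := congrFun (congrFun hcomm' i) j
  rw [Matrix.mul_diagonal, Matrix.diagonal_mul] at this
  simpa [h] using this


lemma coeff_linTerm (d : Fin n →₀ ℕ) (i : Fin n) :
    coeff d (linTerm P i) = ∑ k, if Finsupp.single k 1 = d then linPart P i k else 0 := by
  classical
  rw [linTerm]
  rw [MvPolynomial.coeff_sum]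
  refine Finset.sum_congr rfl fun k _ => ?_
  rw [coeff_C_mul, coeff_X', mul_ite, mul_one, mul_zero]

/-- key structure lemma for the nonlinear part: every monomial has weight `w j`
and only involves variables of strictly larger weight. -/
lemma NP_support (hw : ∀ j, w j < 0) (hP0 : IsPolySelfMap P) (hP : ResonanceDefects w P)
    (j : Fin n) (d : Fin n →₀ ℕ) (hd : d ∈ (NP P j).support) :
    (Finsupp.weight w d : ℝ) = w j ∧ ∀ k, d k ≠ 0 → w j < w k := by
  classical
  have hcd : coeff d (NP P j) ≠ 0 := mem_support_iff.mp hd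
  rw [NP, coeff_sub] at hcd
  -- first: d is not a single variable of degree 1
  have hns : ∀ k, d ≠ Finsupp.single k 1 := by
    intro k hk
    subst hk
    rw [coeff_linTerm] at hcd
    have hsum : (∑ l, if Finsupp.single l 1 = Finsupp.single k 1 then linPart P j l else 0)
        = linPart P j k := by
      rw [Finset.sum_eq_single k]
      · simp
      · intro l _ hl
        rw [if_neg]
        intro hcon
        exact hl ((Finsupp.single_left_inj one_ne_zero).mp hcon)
      · simp
    rw [hsum] at hcd
    exact hcd (by simp [linPart])
  -- the linear term has zero coefficient at d
  have hlz : coeff d (linTerm P j) = 0 := by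
    rw [coeff_linTerm]
    apply Finset.sum_eq_zero
    intro k _
    rw [if_neg]
    exact fun hcon => hns k hcon.symm
  rw [hlz, sub_zero] at hcd
  have hdP : d ∈ (P j).support := mem_support_iff.mpr hcd
  have hdef := hP j d hdP
  rw [defect_eq, sub_eq_zero] at hdef
  refine ⟨hdef.symm, fun k hk => ?_⟩
  -- now the inequality
  have hwsum : ∑ l, (d l : ℝ) * w l = w j := by
    rw [← weight_eq_sum, ← hdef]
  have hle : ∀ l, (d l : ℝ) * w l ≤ 0 := fun l =>
    mul_nonpos_of_nonneg_of_nonpos (Nat.cast_nonneg _) (hw l).le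
  have h1 : (1 : ℝ) ≤ (d k : ℝ) := by
    exact_mod_cast Nat.one_le_iff_ne_zero.mpr hk
  have hsum_le : ∑ l, (d l : ℝ) * w l ≤ (d k : ℝ) * w k := by
    have herase : (∑ l ∈ Finset.univ.erase k, (d l : ℝ) * w l) + (d k : ℝ) * w k
        = ∑ l, (d l : ℝ) * w l := Finset.sum_erase_add _ _ (Finset.mem_univ k)
    have hnp : ∑ l ∈ Finset.univ.erase k, (d l : ℝ) * w l ≤ 0 :=
      Finset.sum_nonpos fun l _ => hle l
    linarith
  have h2 : (d k : ℝ) * w k ≤ 1 * w k := mul_le_mul_of_nonpos_right h1 (hw k).le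
  rw [one_mul] at h2
  rcases lt_or_eq_of_le (le_trans (hwsum ▸ hsum_le) h2) with hlt | heq
  · exact hlt
  -- equality case: d = single k 1, contradiction
  exfalso
  have hdk1 : (d k : ℝ) * w k = w k := by linarith
  have hdk : (d k : ℝ) = 1 := mul_right_cancel₀ (hw k).ne (by rw [hdk1, one_mul])
  have hrest : ∑ l ∈ Finset.univ.erase k, (d l : ℝ) * w l = 0 := by
    have herase : (∑ l ∈ Finset.univ.erase k, (d l : ℝ) * w l) + (d k : ℝ) * w k
        = ∑ l, (d l : ℝ) * w l := Finset.sum_erase_add _ _ (Finset.mem_univ k)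
    linarith
  have hzero : ∀ l ∈ Finset.univ.erase k, (d l : ℝ) * w l = 0 :=
    (Finset.sum_eq_zero_iff_of_nonpos fun l _ => hle l).mp hrest
  apply hns k
  ext l
  rcases eq_or_ne l k with rfl | hlk
  · rw [Finsupp.single_eq_same]
    exact_mod_cast hdk
  · have := hzero l (Finset.mem_erase.mpr ⟨hlk, Finset.mem_univ l⟩)
    rcases mul_eq_zero.mp this with h | h
    · rw [Finsupp.single_apply, if_neg (fun h' => hlk h'.symm)]
      exact_mod_cast h
    · exact absurd h (hw l).ne


lemma NP_hom (hw : ∀ j, w j < 0) (hP0 : IsPolySelfMap P) (hP : ResonanceDefects w P)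
    (j : Fin n) : (NP P j).IsWeightedHomogeneous w (w j) := by
  intro d hd
  exact (NP_support P hw hP0 hP j d (mem_support_iff.mpr hd)).1

lemma Qseq_hom (hw : ∀ j, w j < 0) (hP0 : IsPolySelfMap P) (hP : ResonanceDefects w P)
    (hlin : IsUnit (linPart P).det) :
    ∀ m i, (Qseq P m i).IsWeightedHomogeneous w (w i) := by
  intro m
  induction m with
  | zero =>
      intro i
      apply IsWeightedHomogeneous.sum
      intro j _
      by_cases hz : (linPart P)⁻¹ i j = 0
      · rw [hz]
        simpa using isWeightedHomogeneous_zero (R := ℝ) w (w i)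
      · have hwij : w i = w j := by
          by_contra hne
          exact hz (Linv_block P hP hlin hne)
        have := (isWeightedHomogeneous_C w ((linPart P)⁻¹ i j)).mul
          (isWeightedHomogeneous_X (R := ℝ) w j)
        rwa [zero_add, ← hwij] at this
  | succ m ih =>
      intro i
      apply IsWeightedHomogeneous.sum
      intro j _
      by_cases hz : (linPart P)⁻¹ i j = 0
      · rw [hz]
        simpa using isWeightedHomogeneous_zero (R := ℝ) w (w i)
      · have hwij : w i = w j := by
          by_contra hne
          exact hz (Linv_block P hP hlin hne)
        have hfac : (X j - bind₁ (Qseq P m) (NP P j)).IsWeightedHomogeneous w (w j) :=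
          isWeightedHomogeneous_sub (isWeightedHomogeneous_X (R := ℝ) w j)
            (bind₁_isWeightedHomogeneous ih (NP_hom P hw hP0 hP j))
        have := (isWeightedHomogeneous_C w ((linPart P)⁻¹ i j)).mul hfac
        rwa [zero_add, ← hwij] at this

/-- stability: once a coordinate's rank is below `m`, further iterations don't change it. -/
lemma Q_stable (hw : ∀ j, w j < 0) (hP0 : IsPolySelfMap P) (hP : ResonanceDefects w P)
    (hlin : IsUnit (linPart P).det) :
    ∀ m (y : Fin n → ℝ) (k : Fin n), rnk w k < m →
      eval y (Qseq P (m + 1) k) = eval y (Qseq P m k) := by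
  intro m
  induction m with
  | zero => intro y k hk; omega
  | succ m ih =>
      intro y k hk
      rw [eval_Qsucc, eval_Qsucc]
      refine Finset.sum_congr rfl fun j _ => ?_
      by_cases hz : (linPart P)⁻¹ k j = 0
      · rw [hz, zero_mul, zero_mul]
      · have hwkj : w k = w j := by
          by_contra hne
          exact hz (Linv_block P hP hlin hne)
        congr 2
        apply eval_congr_support
        intro d hd l hl
        have hwl : w j < w l := (NP_support P hw hP0 hP j d hd).2 l hl
        have hrl : rnk w l < rnk w k := by
          rw [rnk_eq hwkj]; exact rnk_lt hwl
        exact ih y l (by omega)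

/-- right inverse on coordinates of small rank -/
lemma right_inv (hw : ∀ j, w j < 0) (hP0 : IsPolySelfMap P) (hP : ResonanceDefects w P)
    (hlin : IsUnit (linPart P).det) :
    ∀ m (y : Fin n → ℝ) (i : Fin n), rnk w i < m →
      eval (fun k => eval y (Qseq P m k)) (P i) = y i := by
  intro m
  match m with
  | 0 => intro y i hi; omega
  | m + 1 =>
    intro y i hi
    rw [eval_P]
    have h1 : (linPart P) * (linPart P)⁻¹ = 1 := Matrix.mul_nonsing_inv _ hlin
    set t : Fin n → ℝ := fun j => y j - eval (fun k => eval y (Qseq P m k)) (NP P j) with ht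
    have hlinsum : (∑ k, linPart P i k * eval y (Qseq P (m + 1) k)) = t i := by
      calc (∑ k, linPart P i k * eval y (Qseq P (m + 1) k))
          = ∑ k, linPart P i k * ∑ j, (linPart P)⁻¹ k j * t j := by
            refine Finset.sum_congr rfl fun k _ => ?_
            rw [eval_Qsucc]
        _ = ∑ k, ∑ j, linPart P i k * ((linPart P)⁻¹ k j * t j) := by
            exact Finset.sum_congr rfl fun k _ => Finset.mul_sum _ _ _
        _ = ∑ j, ∑ k, linPart P i k * ((linPart P)⁻¹ k j * t j) := Finset.sum_comm
        _ = ∑ j, (∑ k, linPart P i k * (linPart P)⁻¹ k j) * t j := by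
            refine Finset.sum_congr rfl fun j _ => ?_
            rw [Finset.sum_mul]
            exact Finset.sum_congr rfl fun k _ => by ring
        _ = ∑ j, (1 : Matrix (Fin n) (Fin n) ℝ) i j * t j := by
            refine Finset.sum_congr rfl fun j _ => ?_
            rw [← Matrix.mul_apply, h1]
        _ = t i := by
            simp [Matrix.one_apply]
    rw [hlinsum]
    have hNP : eval (fun k => eval y (Qseq P (m + 1) k)) (NP P i)
        = eval (fun k => eval y (Qseq P m k)) (NP P i) := by
      apply eval_congr_support
      intro d hd l hl
      have hwl : w i < w l := (NP_support P hw hP0 hP i d hd).2 l hl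
      have hrl : rnk w l < rnk w i := rnk_lt hwl
      exact Q_stable P hw hP0 hP hlin m y l (by omega)
    rw [hNP, ht]
    ring

/-- left inverse on coordinates of small rank -/
lemma left_inv (hw : ∀ j, w j < 0) (hP0 : IsPolySelfMap P) (hP : ResonanceDefects w P)
    (hlin : IsUnit (linPart P).det) :
    ∀ m (x : Fin n → ℝ) (i : Fin n), rnk w i < m →
      eval (evalMap P x) (Qseq P m i) = x i := by
  intro m
  induction m with
  | zero => intro x i hi; omega
  | succ m ih =>
    intro x i hi
    set y : Fin n → ℝ := evalMap P x with hy
    have h2 : (linPart P)⁻¹ * (linPart P) = 1 := Matrix.nonsing_inv_mul _ hlin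
    rw [eval_Qsucc]
    have hterm : ∀ j, (linPart P)⁻¹ i j *
        (y j - eval (fun k => eval y (Qseq P m k)) (NP P j))
        = (linPart P)⁻¹ i j * ∑ k, linPart P j k * x k := by
      intro j
      by_cases hz : (linPart P)⁻¹ i j = 0
      · rw [hz, zero_mul, zero_mul]
      · have hwij : w i = w j := by
          by_contra hne
          exact hz (Linv_block P hP hlin hne)
        have hyj : y j = (∑ k, linPart P j k * x k) + eval x (NP P j) := by
          rw [hy]; exact eval_P P x j
        have hNPj : eval (fun k => eval y (Qseq P m k)) (NP P j) = eval x (NP P j) := by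
          apply eval_congr_support
          intro d hd l hl
          have hwl : w j < w l := (NP_support P hw hP0 hP j d hd).2 l hl
          have hrl : rnk w l < rnk w i := by
            rw [rnk_eq hwij]; exact rnk_lt hwl
          exact ih x l (by omega)
        rw [hyj, hNPj]
        ring
    calc (∑ j, (linPart P)⁻¹ i j *
          (y j - eval (fun k => eval y (Qseq P m k)) (NP P j)))
        = ∑ j, (linPart P)⁻¹ i j * ∑ k, linPart P j k * x k := by
          exact Finset.sum_congr rfl fun j _ => hterm j
      _ = ∑ j, ∑ k, (linPart P)⁻¹ i j * (linPart P j k * x k) := by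
          refine Finset.sum_congr rfl fun j _ => ?_
          rw [Finset.mul_sum]
      _ = ∑ k, ∑ j, (linPart P)⁻¹ i j * (linPart P j k * x k) := Finset.sum_comm
      _ = ∑ k, (∑ j, (linPart P)⁻¹ i j * linPart P j k) * x k := by
          refine Finset.sum_congr rfl fun k _ => ?_
          rw [Finset.sum_mul]
          exact Finset.sum_congr rfl fun j _ => by ring
      _ = ∑ k, (1 : Matrix (Fin n) (Fin n) ℝ) i k * x k := by
          refine Finset.sum_congr rfl fun k _ => ?_
          rw [← Matrix.mul_apply, h2]
      _ = x i := by simp [Matrix.one_apply]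

end Main

end ResAux

/-- If `P` is a resonance polynomial self-map of `ℝ^n` whose linear part
is invertible, then `P` is a bijection of `ℝ^n` and its inverse is (induced by) a
resonance polynomial self-map of `ℝ^n`. -/
theorem resonance_inverse (n : ℕ) (hn : 1 ≤ n) (w : Fin n → ℝ)
    (hw : ∀ j, w j < 0) (P : Fin n → MvPolynomial (Fin n) ℝ)
    (hP0 : IsPolySelfMap P) (hP : ResonanceDefects w P)
    (hlin : IsUnit (linPart P).det) :
    Function.Bijective (evalMap P) ∧
    ∃ Q : Fin n → MvPolynomial (Fin n) ℝ,
      IsPolySelfMap Q ∧ ResonanceDefects w Q ∧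
      Function.LeftInverse (evalMap Q) (evalMap P) ∧
      Function.RightInverse (evalMap Q) (evalMap P) := by
  classical
  set Q : Fin n → MvPolynomial (Fin n) ℝ := ResAux.Qseq P n with hQ
  have hQhom : ∀ i, (Q i).IsWeightedHomogeneous w (w i) := fun i =>
    ResAux.Qseq_hom P hw hP0 hP hlin n i
  have hres : ResonanceDefects w Q := by
    intro i d hd
    rw [ResAux.defect_eq, sub_eq_zero]
    exact (hQhom i (MvPolynomial.mem_support_iff.mp hd)).symm
  have hself : IsPolySelfMap Q := by
    intro i
    rw [MvPolynomial.constantCoeff_eq]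
    by_contra h
    have h0 : (0 : Fin n →₀ ℕ) ∈ (Q i).support := MvPolynomial.mem_support_iff.mpr h
    have hd := hres i 0 h0
    rw [defect] at hd
    simp only [Finsupp.coe_zero, Pi.zero_apply, Nat.cast_zero, zero_mul,
      Finset.sum_const_zero, sub_zero] at hd
    exact (hw i).ne hd
  have hleft : Function.LeftInverse (evalMap Q) (evalMap P) := by
    intro x
    funext i
    exact ResAux.left_inv P hw hP0 hP hlin n x i (ResAux.rnk_lt_card w i)
  have hright : Function.RightInverse (evalMap Q) (evalMap P) := by
    intro y
    funext i
    exact ResAux.right_inv P hw hP0 hP hlin n y i (ResAux.rnk_lt_card w i)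
  exact ⟨⟨hleft.injective, hright.surjective⟩, Q, hself, hres, hleft, hright⟩
end

section
/- Let X and Y be n-tuples of real polynomials in n variables with zero constant coefficients, and let a, b ∈ ℝ. If every monomial occurring in every component of X has defect ≤ a and every monomial occurring in every component of Y has defect ≤ b, then every monomial occurring in every component of the Lie bracket [X, Y] has defect ≤ a + b. -/
open MvPolynomial

/-- The Lie bracket of two `n`-tuples of polynomials (viewed as polynomial
vector fields): the `i`-th component of `[X, Y]` is
`Σ_j (X j · ∂_j(Y i) − Y j · ∂_j(X i))`. -/
noncomputable def polyBracket {n : ℕ} (X Y : Fin n → MvPolynomial (Fin n) ℝ) :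
    Fin n → MvPolynomial (Fin n) ℝ :=
  fun i => ∑ j, (X j * MvPolynomial.pderiv j (Y i) - Y j * MvPolynomial.pderiv j (X i))

lemma mem_support_pderiv_add {n : ℕ} (j : Fin n) (p : MvPolynomial (Fin n) ℝ)
    (d : Fin n →₀ ℕ) (hd : d ∈ (MvPolynomial.pderiv j p).support) :
    d + Finsupp.single j 1 ∈ p.support := by
  classical
  rw [MvPolynomial.mem_support_iff] at hd
  have hp : MvPolynomial.pderiv j p
      = ∑ s ∈ p.support, MvPolynomial.monomial (s - Finsupp.single j 1)
          (MvPolynomial.coeff s p * (s j : ℝ)) := by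
    conv_lhs => rw [← MvPolynomial.support_sum_monomial_coeff p]
    rw [map_sum]
    refine Finset.sum_congr rfl fun s _ => ?_
    rw [MvPolynomial.pderiv_monomial]
  rw [hp, MvPolynomial.coeff_sum] at hd
  obtain ⟨s, hs, hne⟩ := Finset.exists_ne_zero_of_sum_ne_zero hd
  rw [MvPolynomial.coeff_monomial] at hne
  split_ifs at hne with h
  · have hsj : s j ≠ 0 := by
      intro h0
      apply hne
      simp [h0]
    have hle : Finsupp.single j 1 ≤ s := by
      rw [Finsupp.single_le_iff]
      omega
    have : d + Finsupp.single j 1 = s := by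
      rw [← h, tsub_add_cancel_of_le hle]
    rwa [this]
  · exact absurd rfl hne

lemma sum_w_add {n : ℕ} (w : Fin n → ℝ) (d e : Fin n →₀ ℕ) :
    ∑ k, (((d + e) k : ℕ) : ℝ) * w k
      = ∑ k, ((d k : ℕ) : ℝ) * w k + ∑ k, ((e k : ℕ) : ℝ) * w k := by
  rw [← Finset.sum_add_distrib]
  refine Finset.sum_congr rfl fun k _ => ?_
  simp [Finsupp.add_apply, add_mul]

lemma sum_w_single {n : ℕ} (w : Fin n → ℝ) (j : Fin n) :
    ∑ k, (((Finsupp.single j 1 : Fin n →₀ ℕ) k : ℕ) : ℝ) * w k = w j := by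
  classical
  rw [Finset.sum_eq_single j]
  · simp
  · intro k _ hk
    simp [Finsupp.single_apply, Ne.symm hk]
  · simp

/-- If every monomial occurring in every component of `X` has defect `≤ a`
and every monomial occurring in every component of `Y` has defect `≤ b`, then every
monomial occurring in every component of the Lie bracket `[X, Y]` has defect `≤ a + b`. -/
theorem polyBracket_defect_le (n : ℕ) (hn : 1 ≤ n) (w : Fin n → ℝ)
    (hw : ∀ j, w j < 0) (X Y : Fin n → MvPolynomial (Fin n) ℝ)
    (hX0 : ∀ i, MvPolynomial.constantCoeff (X i) = 0)
    (hY0 : ∀ i, MvPolynomial.constantCoeff (Y i) = 0)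
    (a b : ℝ)
    (hX : ∀ i, ∀ d ∈ (X i).support, defect w i d ≤ a)
    (hY : ∀ i, ∀ d ∈ (Y i).support, defect w i d ≤ b) :
    ∀ i, ∀ d ∈ ((polyBracket X Y) i).support, defect w i d ≤ a + b := by
  classical
  intro i d hd
  rw [MvPolynomial.mem_support_iff, polyBracket, MvPolynomial.coeff_sum] at hd
  obtain ⟨j, _, hne⟩ := Finset.exists_ne_zero_of_sum_ne_zero hd
  rw [MvPolynomial.coeff_sub, sub_ne_zero] at hne
  have hcases : MvPolynomial.coeff d (X j * MvPolynomial.pderiv j (Y i)) ≠ 0 ∨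
      MvPolynomial.coeff d (Y j * MvPolynomial.pderiv j (X i)) ≠ 0 := by
    by_contra h
    push_neg at h
    exact hne (h.1.trans h.2.symm)
  rcases hcases with h | h
  · have hmem := MvPolynomial.support_mul _ _ (MvPolynomial.mem_support_iff.mpr h)
    obtain ⟨u, hu, v, hv, huv⟩ := Finset.mem_add.mp hmem
    have h1 := hX j u hu
    have h2 := hY i _ (mem_support_pderiv_add j (Y i) v hv)
    rw [defect] at h1 h2 ⊢
    rw [sum_w_add w v (Finsupp.single j 1), sum_w_single w j] at h2
    subst huv
    rw [sum_w_add w u v]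
    linarith
  · have hmem := MvPolynomial.support_mul _ _ (MvPolynomial.mem_support_iff.mpr h)
    obtain ⟨u, hu, v, hv, huv⟩ := Finset.mem_add.mp hmem
    have h1 := hY j u hu
    have h2 := hX i _ (mem_support_pderiv_add j (X i) v hv)
    rw [defect] at h1 h2 ⊢
    rw [sum_w_add w v (Finsupp.single j 1), sum_w_single w j] at h2
    subst huv
    rw [sum_w_add w u v]
    linarith
end

section
/- Let N be a natural number with N ≥ wmin/wmax. Then any left-nested iterated Lie bracket [X_N, [X_{N−1}, …, [X_2, X_1]…]] of N strictly subresonance polynomial self-maps X_1, …, X_N of ℝ^n is the zero tuple. In particular, the strictly subresonance polynomial self-maps form a nilpotent Lie algebra under the bracket. -/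
open MvPolynomial

/-- The left-nested iterated Lie bracket `[X_N, [X_{N−1}, …, [X_2, X_1]…]]`. -/
noncomputable def nestedBracket {n : ℕ} (X : ℕ → Fin n → MvPolynomial (Fin n) ℝ) :
    ℕ → Fin n → MvPolynomial (Fin n) ℝ
  | 0 => fun _ => 0
  | 1 => X 1
  | (k+2) => polyBracket (X (k+2)) (nestedBracket X (k+1))

lemma support_pderiv_subset {n : ℕ} (j : Fin n) (p : MvPolynomial (Fin n) ℝ)
    {v : Fin n →₀ ℕ} (hv : v ∈ (pderiv j p).support) :
    v + Finsupp.single j 1 ∈ p.support := by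
  classical
  have h : pderiv j p
      = ∑ m ∈ p.support, monomial (m - Finsupp.single j 1) (coeff m p * (m j : ℝ)) := by
    conv_lhs => rw [← support_sum_monomial_coeff p]
    rw [map_sum]
    simp [pderiv_monomial]
  rw [h] at hv
  obtain ⟨m, hm, hv'⟩ := Finset.mem_biUnion.mp (support_sum hv)
  rw [mem_support_iff, coeff_monomial] at hv'
  by_cases hvm : v = m - Finsupp.single j 1
  · simp only [if_pos hvm.symm] at hv'
    have hmj : m j ≠ 0 := by
      intro h0; rw [h0] at hv'; simp at hv'
    have hle : Finsupp.single j 1 ≤ m := by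
      rw [Finsupp.single_le_iff]; omega
    rw [hvm, tsub_add_cancel_of_le hle]
    exact hm
  · simp [Ne.symm hvm] at hv'

lemma single_sum_w {n : ℕ} (w : Fin n → ℝ) (j : Fin n) :
    ∑ k, ((Finsupp.single j 1 : Fin n →₀ ℕ) k : ℝ) * w k = w j := by
  rw [Finset.sum_eq_single j]
  · simp
  · intro b _ hb; simp [Finsupp.single_apply, Ne.symm hb]
  · simp

lemma defect_add_single {n : ℕ} (w : Fin n → ℝ) (i j : Fin n) (u v : Fin n →₀ ℕ) :
    defect w i (u + v) = defect w j u + defect w i (v + Finsupp.single j 1) := by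
  simp only [defect, Finsupp.add_apply, Nat.cast_add, add_mul, Finset.sum_add_distrib,
    single_sum_w]
  ring

lemma defect_mul_pderiv {n : ℕ} (w : Fin n → ℝ) {a b : ℝ} (i j : Fin n)
    (p q : MvPolynomial (Fin n) ℝ)
    (hp : ∀ d ∈ p.support, defect w j d ≤ a)
    (hq : ∀ d ∈ q.support, defect w i d ≤ b)
    {d} (hd : d ∈ (p * pderiv j q).support) : defect w i d ≤ a + b := by
  classical
  obtain ⟨u, hu, v, hv, rfl⟩ := Finset.mem_add.mp (support_mul _ _ hd)
  have h1 := hp u hu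
  have h2 := hq _ (support_pderiv_subset j q hv)
  rw [defect_add_single w i j u v]
  linarith

lemma defect_polyBracket {n : ℕ} (w : Fin n → ℝ) {a b : ℝ}
    (X Y : Fin n → MvPolynomial (Fin n) ℝ)
    (hXd : ∀ j, ∀ d ∈ (X j).support, defect w j d ≤ a)
    (hYd : ∀ j, ∀ d ∈ (Y j).support, defect w j d ≤ b)
    (i : Fin n) {d} (hd : d ∈ (polyBracket X Y i).support) :
    defect w i d ≤ a + b := by
  classical
  obtain ⟨j, -, hj⟩ := Finset.mem_biUnion.mp (support_sum hd)
  rcases Finset.mem_union.mp (MvPolynomial.support_sub _ _ _ hj) with h | h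
  · exact defect_mul_pderiv w i j (X j) (Y i) (hXd j) (hYd i) h
  · have := defect_mul_pderiv w i j (Y j) (X i) (hYd j) (hXd i) h
    linarith

lemma constantCoeff_polyBracket {n : ℕ} (X Y : Fin n → MvPolynomial (Fin n) ℝ)
    (hX : ∀ i, constantCoeff (X i) = 0) (hY : ∀ i, constantCoeff (Y i) = 0) (i : Fin n) :
    constantCoeff (polyBracket X Y i) = 0 := by
  simp [polyBracket, map_sum, map_sub, map_mul, hX, hY]

lemma nestedBracket_succ {n : ℕ} (X : ℕ → Fin n → MvPolynomial (Fin n) ℝ)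
    (k : ℕ) (hk : 1 ≤ k) :
    nestedBracket X (k + 1) = polyBracket (X (k + 1)) (nestedBracket X k) := by
  obtain ⟨m, rfl⟩ := Nat.exists_eq_add_of_le hk
  rw [show 1 + m + 1 = m + 2 by omega, show 1 + m = m + 1 by omega]
  rfl

/-- If `N ≥ wmin/wmax`, then any left-nested iterated Lie bracket
`[X_N, [X_{N−1}, …, [X_2, X_1]…]]` of `N` strictly subresonance polynomial
self-maps `X_1, …, X_N` of `ℝ^n` is the zero tuple (so the strictly subresonance
polynomial self-maps form a nilpotent Lie algebra under the bracket). -/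
theorem strict_subresonance_nested_bracket_eq_zero (n : ℕ) (hn : 1 ≤ n)
    (w : Fin n → ℝ) (hw : ∀ j, w j < 0) (N : ℕ)
    (hN : wmin hn w / wmax hn w ≤ (N : ℝ))
    (X : ℕ → Fin n → MvPolynomial (Fin n) ℝ)
    (hX0 : ∀ k, 1 ≤ k → k ≤ N → ∀ i, MvPolynomial.constantCoeff (X k i) = 0)
    (hX : ∀ k, 1 ≤ k → k ≤ N →
      ∀ i, ∀ d ∈ (X k i).support, defect w i d ≤ wmax hn w) :
    nestedBracket X N = fun _ => 0 := by
  classical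
  rcases Nat.eq_zero_or_pos N with rfl | hN1
  · rfl
  have hmax : wmax hn w < 0 :=
    (Finset.sup'_lt_iff _).mpr fun j _ => hw j
  have main : ∀ k, 1 ≤ k → k ≤ N →
      (∀ i, constantCoeff (nestedBracket X k i) = 0) ∧
      (∀ i, ∀ d ∈ (nestedBracket X k i).support,
        defect w i d ≤ (k : ℝ) * wmax hn w) := by
    intro k hk
    induction k, hk using Nat.le_induction with
    | base =>
      intro h1
      refine ⟨fun i => hX0 1 le_rfl h1 i, fun i d hd => ?_⟩
      have := hX 1 le_rfl h1 i d (by simpa [nestedBracket] using hd)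
      simpa using this
    | succ k hk ih =>
      intro hkN
      have hkN' : k ≤ N := by omega
      obtain ⟨ihc, ihd⟩ := ih hkN'
      rw [nestedBracket_succ X k hk]
      refine ⟨constantCoeff_polyBracket _ _ (fun i => hX0 (k+1) (by omega) hkN i) ihc, ?_⟩
      intro i d hd
      have := defect_polyBracket w (X (k+1)) (nestedBracket X k)
        (fun j d hd => hX (k+1) (by omega) hkN j d hd) ihd i hd
      push_cast
      linarith
  obtain ⟨hcc, hdef⟩ := main N hN1 le_rfl
  funext i
  rw [← MvPolynomial.support_eq_empty, Finset.eq_empty_iff_forall_notMem]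
  intro d hd
  have hd0 : d ≠ 0 := by
    intro h0
    rw [h0, mem_support_iff] at hd
    rw [constantCoeff_eq] at hcc
    exact hd (hcc i)
  obtain ⟨j, hj⟩ : ∃ j, d j ≠ 0 := by
    by_contra hc
    push_neg at hc
    exact hd0 (Finsupp.ext fun j => hc j)
  have hsum : ∑ k, (d k : ℝ) * w k ≤ w j := by
    have h1 : (d j : ℝ) * w j ≤ ∑ k, (d k : ℝ) * w k → False → True := fun _ _ => trivial
    have h2 : ∑ k, -((d k : ℝ) * w k) ≥ -((d j : ℝ) * w j) :=
      Finset.single_le_sum (f := fun k => -((d k : ℝ) * w k))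
        (fun k _ => by
          simp only [neg_nonneg]
          exact mul_nonpos_of_nonneg_of_nonpos (Nat.cast_nonneg _) (hw k).le)
        (Finset.mem_univ j)
    have h3 : (d j : ℝ) * w j ≤ w j := by
      have : (1 : ℝ) ≤ (d j : ℝ) := by exact_mod_cast Nat.one_le_iff_ne_zero.mpr hj
      nlinarith [hw j]
    rw [Finset.sum_neg_distrib] at h2
    linarith
  have hwi : wmin hn w ≤ w i := Finset.inf'_le _ (Finset.mem_univ i)
  have hwj : w j ≤ wmax hn w := Finset.le_sup' _ (Finset.mem_univ j)
  have hdd := hdef i d hd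
  rw [div_le_iff_of_neg hmax] at hN
  simp only [defect] at hdd
  linarith
end

section
/- Let g be a subresonance polynomial self-map of ℝ^n with invertible linear part, with inverse g⁻¹ (itself a subresonance polynomial self-map), and let X be a strictly subresonance polynomial self-map of ℝ^n. Then g ∘ (id + X) ∘ g⁻¹ equals id + Z for some strictly subresonance polynomial self-map Z of ℝ^n; that is, the group of maps of the form identity plus a strictly subresonance polynomial self-map is normalized by the subresonance polynomial diffeomorphisms. -/
open MvPolynomial

/-- `P` is strictly subresonance: every monomial occurring with nonzero
coefficient in each component has defect `≤ wmax`. -/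
def StrictSubresonanceDefects {n : ℕ} (hn : 1 ≤ n) (w : Fin n → ℝ)
    (P : Fin n → MvPolynomial (Fin n) ℝ) : Prop :=
  ∀ i, ∀ d ∈ (P i).support, defect w i d ≤ wmax hn w

namespace SRAux

variable {n : ℕ} {w : Fin n → ℝ}

/-- The weight of a multi-index. -/
noncomputable def wt (w : Fin n → ℝ) (d : Fin n →₀ ℕ) : ℝ := ∑ j, (d j : ℝ) * w j

/-- All monomials of `p` have weight at least `c`. -/
def WGE (w : Fin n → ℝ) (c : ℝ) (p : MvPolynomial (Fin n) ℝ) : Prop :=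
  ∀ d ∈ p.support, c ≤ wt w d

lemma wt_add (d e : Fin n →₀ ℕ) : wt w (d + e) = wt w d + wt w e := by
  simp [wt, add_mul, Finset.sum_add_distrib]

lemma wge_mono {c c' : ℝ} {p} (h : c' ≤ c) (hp : WGE w c p) : WGE w c' p :=
  fun d hd => le_trans h (hp d hd)

lemma wge_zero {c : ℝ} : WGE w c (0 : MvPolynomial (Fin n) ℝ) := by
  intro d hd; simp at hd

lemma wge_add {c : ℝ} {p q} (hp : WGE w c p) (hq : WGE w c q) : WGE w c (p + q) := by
  classical
  intro d hd
  rcases Finset.mem_union.mp (MvPolynomial.support_add hd) with h | h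
  exacts [hp d h, hq d h]

lemma wge_sum {c : ℝ} {ι : Type*} {s : Finset ι} {f : ι → MvPolynomial (Fin n) ℝ}
    (h : ∀ i ∈ s, WGE w c (f i)) : WGE w c (∑ i ∈ s, f i) := by
  classical
  induction s using Finset.induction with
  | empty => simpa using (wge_zero : WGE w c 0)
  | @insert a s ha ih =>
    rw [Finset.sum_insert ha]
    exact wge_add (h _ (Finset.mem_insert_self _ _))
      (ih fun i hi => h i (Finset.mem_insert_of_mem hi))

lemma wge_smul {c : ℝ} {r : ℝ} {p} (hp : WGE w c p) : WGE w c (r • p) := by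
  intro d hd
  exact hp d (MvPolynomial.support_smul hd)

lemma wge_mul {c c' : ℝ} {p q} (hp : WGE w c p) (hq : WGE w c' q) :
    WGE w (c + c') (p * q) := by
  classical
  intro d hd
  rcases Finset.mem_add.mp (MvPolynomial.support_mul p q hd) with ⟨a, ha, b, hb, rfl⟩
  rw [wt_add]
  exact add_le_add (hp a ha) (hq b hb)

lemma wge_one : WGE w 0 (1 : MvPolynomial (Fin n) ℝ) := by
  intro d hd
  rcases Finset.mem_singleton.mp (by simpa using MvPolynomial.support_monomial_subset hd) with rfl
  simp [wt]

lemma wge_pow {c : ℝ} {p} (hp : WGE w c p) (k : ℕ) : WGE w ((k : ℝ) * c) (p ^ k) := by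
  induction k with
  | zero => simpa using (wge_one : WGE w 0 1)
  | succ k ih =>
    rw [pow_succ]
    have := wge_mul ih hp
    refine wge_mono (le_of_eq ?_) this
    push_cast; ring

lemma wge_X (j : Fin n) : WGE w (w j) (MvPolynomial.X j) := by
  intro d hd
  rcases Finset.mem_singleton.mp (by simpa [MvPolynomial.support_X] using hd) with rfl
  simp [wt, Finsupp.single_apply]

lemma wge_prod {s : Finset (Fin n)} {c : Fin n → ℝ} {p : Fin n → MvPolynomial (Fin n) ℝ}
    (h : ∀ j ∈ s, WGE w (c j) (p j)) : WGE w (∑ j ∈ s, c j) (∏ j ∈ s, p j) := by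
  classical
  induction s using Finset.induction with
  | empty => simpa using (wge_one : WGE w 0 1)
  | @insert a s ha ih =>
    rw [Finset.sum_insert ha, Finset.prod_insert ha]
    exact wge_mul (h _ (Finset.mem_insert_self _ _))
      (ih fun j hj => h j (Finset.mem_insert_of_mem hj))

lemma wge_bind {P : Fin n → MvPolynomial (Fin n) ℝ} (hP : ∀ j, WGE w (w j) (P j))
    {c : ℝ} {q} (hq : WGE w c q) : WGE w c (MvPolynomial.bind₁ P q) := by
  classical
  rw [q.as_sum, map_sum]
  apply wge_sum
  intro d hd
  rw [MvPolynomial.bind₁_monomial, ← MvPolynomial.smul_eq_C_mul]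
  apply wge_smul
  have h1 : WGE w (∑ j ∈ d.support, (d j : ℝ) * w j) (∏ j ∈ d.support, P j ^ d j) :=
    wge_prod (fun j _ => wge_pow (hP j) (d j))
  refine wge_mono ?_ h1
  have h2 : (∑ j ∈ d.support, (d j : ℝ) * w j) = wt w d := by
    rw [wt]
    apply Finset.sum_subset (Finset.subset_univ _)
    intro j _ hj
    simp [Finsupp.notMem_support_iff.mp hj]
  rw [h2]
  exact hq d hd

lemma constantCoeff_bind {P : Fin n → MvPolynomial (Fin n) ℝ}
    (hP : ∀ j, MvPolynomial.constantCoeff (P j) = 0) (q : MvPolynomial (Fin n) ℝ) :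
    MvPolynomial.constantCoeff (MvPolynomial.bind₁ P q) = MvPolynomial.constantCoeff q := by
  rw [MvPolynomial.hom_bind₁]
  simp only [hP]
  rw [MvPolynomial.eval₂Hom_zero'_apply]
  simp

end SRAux

/-- If `g` is a subresonance polynomial self-map with (subresonance)
inverse `ginv`, and `A` is a strictly subresonance polynomial self-map, then
`g ∘ (id + A) ∘ g⁻¹ = id + Z` for some strictly subresonance polynomial self-map `Z`;
i.e. the group of maps of the form identity plus a strictly subresonance polynomial
self-map is normalized by the subresonance polynomial diffeomorphisms. -/
theorem strict_subresonance_normalized (n : ℕ) (hn : 1 ≤ n) (w : Fin n → ℝ)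
    (hw : ∀ j, w j < 0) (g ginv A : Fin n → MvPolynomial (Fin n) ℝ)
    (hg0 : IsPolySelfMap g) (hg : SubresonanceDefects w g)
    (hginv0 : IsPolySelfMap ginv) (hginv : SubresonanceDefects w ginv)
    (hleft : ∀ i, MvPolynomial.bind₁ ginv (g i) = MvPolynomial.X i)
    (hright : ∀ i, MvPolynomial.bind₁ g (ginv i) = MvPolynomial.X i)
    (hA0 : IsPolySelfMap A) (hA : StrictSubresonanceDefects hn w A) :
    ∃ Z : Fin n → MvPolynomial (Fin n) ℝ,
      IsPolySelfMap Z ∧ StrictSubresonanceDefects hn w Z ∧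
      ∀ i, MvPolynomial.bind₁ ginv
            (MvPolynomial.bind₁ (fun j => MvPolynomial.X j + A j) (g i))
          = MvPolynomial.X i + Z i := by
  classical
  open SRAux in
  set M := wmax hn w with hMdef
  have hM0 : M ≤ 0 := by
    apply Finset.sup'_le
    intro j _
    exact le_of_lt (hw j)
  -- translate the hypotheses into `WGE` facts
  have hgW : ∀ i, WGE w (w i) (g i) := by
    intro i d hd
    have := hg i d hd
    unfold defect at this
    simp only [wt]
    linarith
  have hginvW : ∀ i, WGE w (w i) (ginv i) := by
    intro i d hd
    have := hginv i d hd
    unfold defect at this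
    simp only [wt]
    linarith
  have hAW : ∀ j, WGE w (w j - M) (A j) := by
    intro j d hd
    have := hA j d hd
    unfold defect at this
    simp only [wt]
    rw [← hMdef] at this
    linarith
  have hXA : ∀ j, WGE w (w j) (MvPolynomial.X j + A j) := fun j =>
    wge_add (wge_X j) (wge_mono (by linarith) (hAW j))
  -- difference of powers
  have hdiffpow : ∀ (j : Fin n) (k : ℕ),
      WGE w ((k : ℝ) * w j - M)
        ((MvPolynomial.X j + A j) ^ k - (MvPolynomial.X j) ^ k) := by
    intro j k
    induction k with
    | zero => simpa using (wge_zero : WGE w ((0:ℝ) * w j - M) 0)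
    | succ k ih =>
      have hid : (MvPolynomial.X j + A j) ^ (k + 1) - (MvPolynomial.X j) ^ (k + 1)
          = (MvPolynomial.X j + A j) * ((MvPolynomial.X j + A j) ^ k
              - (MvPolynomial.X j) ^ k)
            + A j * (MvPolynomial.X j) ^ k := by ring
      rw [hid]
      refine wge_add (wge_mono (le_of_eq ?_) (wge_mul (hXA j) ih))
        (wge_mono ?_ (wge_mul (hAW j) (wge_pow (wge_X j) k)))
      · push_cast; ring
      · push_cast; linarith
  -- difference of products
  have hdiffprod : ∀ (d : Fin n →₀ ℕ) (s : Finset (Fin n)),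
      WGE w ((∑ j ∈ s, (d j : ℝ) * w j) - M)
        ((∏ j ∈ s, (MvPolynomial.X j + A j) ^ d j)
          - ∏ j ∈ s, (MvPolynomial.X j) ^ d j) := by
    intro d s
    induction s using Finset.induction with
    | empty => simpa using (wge_zero : WGE w ((0:ℝ) - M) 0)
    | @insert a s ha ih =>
      rw [Finset.prod_insert ha, Finset.prod_insert ha]
      have hid : (MvPolynomial.X a + A a) ^ d a * ∏ j ∈ s, (MvPolynomial.X j + A j) ^ d j
          - (MvPolynomial.X a) ^ d a * ∏ j ∈ s, (MvPolynomial.X j) ^ d j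
          = (MvPolynomial.X a + A a) ^ d a
              * ((∏ j ∈ s, (MvPolynomial.X j + A j) ^ d j)
                  - ∏ j ∈ s, (MvPolynomial.X j) ^ d j)
            + ((MvPolynomial.X a + A a) ^ d a - (MvPolynomial.X a) ^ d a)
              * ∏ j ∈ s, (MvPolynomial.X j) ^ d j := by ring
      rw [hid, Finset.sum_insert ha]
      refine wge_add (wge_mono (le_of_eq ?_) (wge_mul (wge_pow (hXA a) (d a)) ih))
        (wge_mono (le_of_eq ?_)
          (wge_mul (hdiffpow a (d a)) (wge_prod fun j _ => wge_pow (wge_X j) (d j))))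
      · ring
      · ring
  -- the inner difference
  have hE : ∀ i, WGE w (w i - M)
      (MvPolynomial.bind₁ (fun j => MvPolynomial.X j + A j) (g i) - g i) := by
    intro i
    have hrepr : MvPolynomial.bind₁ (fun j => MvPolynomial.X j + A j) (g i) - g i
        = ∑ d ∈ (g i).support, (g i).coeff d •
            ((∏ j ∈ d.support, (MvPolynomial.X j + A j) ^ d j)
              - ∏ j ∈ d.support, (MvPolynomial.X j) ^ d j) := by
      conv_lhs => rw [(g i).as_sum, map_sum]
      rw [← Finset.sum_sub_distrib]
      apply Finset.sum_congr rfl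
      intro d _
      rw [MvPolynomial.bind₁_monomial, MvPolynomial.monomial_eq, Finsupp.prod,
        smul_sub, MvPolynomial.smul_eq_C_mul, MvPolynomial.smul_eq_C_mul]
    rw [hrepr]
    apply wge_sum
    intro d hd
    apply wge_smul
    refine wge_mono ?_ (hdiffprod d d.support)
    have h2 : (∑ j ∈ d.support, (d j : ℝ) * w j) = wt w d := by
      rw [wt]
      apply Finset.sum_subset (Finset.subset_univ _)
      intro j _ hj
      simp [Finsupp.notMem_support_iff.mp hj]
    rw [h2]
    have h3 := hg i d hd
    unfold defect at h3
    simp only [wt]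
    linarith [hgW i d hd]
  -- define Z
  refine ⟨fun i => MvPolynomial.bind₁ ginv
      (MvPolynomial.bind₁ (fun j => MvPolynomial.X j + A j) (g i) - g i), ?_, ?_, ?_⟩
  · -- zero constant coefficient
    intro i
    rw [SRAux.constantCoeff_bind hginv0]
    rw [map_sub, SRAux.constantCoeff_bind (fun j => by simp [hA0 j])]
    simp [hg0 i]
  · -- strict subresonance
    intro i d hd
    have := wge_bind hginvW (hE i) d hd
    unfold defect
    rw [← hMdef]
    simp only [wt] at this
    linarith
  · -- the composition identity
    intro i
    rw [show MvPolynomial.bind₁ (fun j => MvPolynomial.X j + A j) (g i)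
        = g i + (MvPolynomial.bind₁ (fun j => MvPolynomial.X j + A j) (g i) - g i) by ring,
      map_add, hleft i]
end

section
/- A polynomial self-map X of ℝ^n satisfies Λ ∘ X = X ∘ Λ (as maps ℝ^n → ℝ^n) if and only if X is resonance, i.e., every monomial occurring with nonzero coefficient in every component of X has defect equal to 0. -/
open MvPolynomial

lemma prod_exp_pow_aux {n : ℕ} (w : Fin n → ℝ) (x : Fin n → ℝ) (d : Fin n →₀ ℕ) :
    ∏ j, (Real.exp (w j) * x j) ^ (d j)
      = Real.exp (∑ j, (d j : ℝ) * w j) * ∏ j, x j ^ (d j) := by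
  rw [Real.exp_sum, ← Finset.prod_mul_distrib]
  refine Finset.prod_congr rfl fun j _ => ?_
  rw [mul_pow, ← Real.exp_nat_mul]

lemma eval_scaled {n : ℕ} (w : Fin n → ℝ) (x : Fin n → ℝ) (p : MvPolynomial (Fin n) ℝ) :
    MvPolynomial.eval (fun j => Real.exp (w j) * x j) p
      = ∑ d ∈ p.support,
          Real.exp (∑ j, (d j : ℝ) * w j) * (coeff d p * ∏ j, x j ^ (d j)) := by
  rw [eval_eq']
  refine Finset.sum_congr rfl fun d _ => ?_
  rw [prod_exp_pow_aux]
  ring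

/-- A polynomial self-map `P` of `ℝ^n` satisfies `Λ ∘ P = P ∘ Λ`
(as maps `ℝ^n → ℝ^n`, where `Λ` is the diagonal map with entries `exp (w j)`)
if and only if `P` is resonance, i.e. every monomial occurring with nonzero
coefficient in every component of `P` has defect equal to `0`. -/
theorem commutes_with_Lambda_iff_resonance (n : ℕ) (hn : 1 ≤ n) (w : Fin n → ℝ)
    (hw : ∀ j, w j < 0) (P : Fin n → MvPolynomial (Fin n) ℝ)
    (hP0 : ∀ i, MvPolynomial.constantCoeff (P i) = 0) :
    (∀ (x : Fin n → ℝ) (i : Fin n),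
        Real.exp (w i) * MvPolynomial.eval x (P i)
          = MvPolynomial.eval (fun j => Real.exp (w j) * x j) (P i))
      ↔ (∀ i, ∀ d ∈ (P i).support, defect w i d = 0) := by
  classical
  constructor
  · intro h i d hd
    set p := P i with hp
    -- the difference polynomial is zero
    have key : (∑ e ∈ p.support,
        monomial e ((Real.exp (w i) - Real.exp (∑ j, (e j : ℝ) * w j)) * coeff e p)) = 0 := by
      apply MvPolynomial.funext
      intro x
      rw [map_sum, map_zero]
      simp only [eval_monomial, Finsupp.prod_pow]
      have := h x i
      rw [eval_scaled w x p] at this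
      rw [eval_eq'] at this
      rw [Finset.mul_sum] at this
      have expand : ∀ e ∈ p.support,
          (Real.exp (w i) - Real.exp (∑ j, (e j : ℝ) * w j)) * coeff e p * ∏ j, x j ^ (e j)
          = Real.exp (w i) * (coeff e p * ∏ j, x j ^ (e j))
            - Real.exp (∑ j, (e j : ℝ) * w j) * (coeff e p * ∏ j, x j ^ (e j)) := by
        intro e _; ring
      rw [Finset.sum_congr rfl expand, Finset.sum_sub_distrib, this, sub_self]
    have hc : coeff d (∑ e ∈ p.support,
        monomial e ((Real.exp (w i) - Real.exp (∑ j, (e j : ℝ) * w j)) * coeff e p))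
        = (Real.exp (w i) - Real.exp (∑ j, (d j : ℝ) * w j)) * coeff d p := by
      rw [coeff_sum]
      rw [Finset.sum_eq_single d]
      · rw [coeff_monomial, if_pos rfl]
      · intro e _ hne
        rw [coeff_monomial, if_neg hne]
      · intro hnot; exact absurd hd hnot
    rw [key, coeff_zero] at hc
    have hcoeff : coeff d p ≠ 0 := mem_support_iff.mp hd
    have : Real.exp (w i) - Real.exp (∑ j, (d j : ℝ) * w j) = 0 := by
      rcases mul_eq_zero.mp hc.symm with h1 | h1
      · exact h1
      · exact absurd h1 hcoeff
    have := Real.exp_injective (by linarith [this] : Real.exp (w i) = Real.exp (∑ j, (d j : ℝ) * w j))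
    unfold defect
    linarith [this]
  · intro h x i
    rw [eval_scaled w x (P i), eval_eq', Finset.mul_sum]
    refine Finset.sum_congr rfl fun e he => ?_
    have hd := h i e he
    unfold defect at hd
    have : (∑ j, (e j : ℝ) * w j) = w i := by linarith [hd]
    rw [this]
end

section
/- Let (M, μ) be a probability space, T : M → M a measure-preserving map, A : M → GL(d, ℝ) a measurable map, and let A(k, x) = A(T^{k−1} x) ∘ ⋯ ∘ A(T x) ∘ A(x) be the associated linear cocycle. Assume that for μ-almost every x and every nonzero v ∈ ℝ^d, ‖A(k, x) v‖ → ∞ as k → ∞. If τ : M → ℝ^d is a measurable map satisfying τ(T x) = A(x) τ(x) for μ-almost every x, then τ = 0 μ-almost everywhere. -/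
open MeasureTheory Filter

/-- The linear cocycle over `T` generated by `A`:
`cocycle T A k x = A(T^{k−1} x) ∘ ⋯ ∘ A(T x) ∘ A(x)`. -/
noncomputable def cocycle {M E : Type*} [NormedAddCommGroup E] [NormedSpace ℝ E]
    (T : M → M) (A : M → E ≃L[ℝ] E) : ℕ → M → (E ≃L[ℝ] E)
  | 0, _ => ContinuousLinearEquiv.refl ℝ E
  | (k + 1), x => (A x).trans (cocycle T A k (T x))

lemma cocycle_succ_apply {M E : Type*} [NormedAddCommGroup E] [NormedSpace ℝ E]
    (T : M → M) (A : M → E ≃L[ℝ] E) (k : ℕ) (x : M) (v : E) :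
    cocycle T A (k + 1) x v = A (T^[k] x) (cocycle T A k x v) := by
  induction k generalizing x v with
  | zero => rfl
  | succ k ih =>
      show cocycle T A (k + 1) (T x) (A x v) = _
      rw [ih (T x) (A x v), Function.iterate_succ_apply]
      rfl

/-- Let `(M, μ)` be a probability space, `T` a measure-preserving map,
`A : M → GL(d, ℝ)` measurable, with associated linear cocycle `A(k, x)`.  If for
`μ`-a.e. `x` and every nonzero `v`, `‖A(k, x) v‖ → ∞`, and `τ : M → ℝ^d` is measurable
with `τ(T x) = A(x) τ(x)` a.e., then `τ = 0` almost everywhere. -/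
theorem invariant_section_eq_zero {M : Type*} [MeasurableSpace M]
    (μ : Measure M) [IsProbabilityMeasure μ] (d : ℕ) (T : M → M)
    (hT : MeasurePreserving T μ μ)
    (A : M → (EuclideanSpace ℝ (Fin d)) ≃L[ℝ] (EuclideanSpace ℝ (Fin d)))
    (hA : ∀ v : EuclideanSpace ℝ (Fin d), Measurable fun x => A x v)
    (hgrow : ∀ᵐ x ∂μ, ∀ v : EuclideanSpace ℝ (Fin d), v ≠ 0 →
      Tendsto (fun k : ℕ => ‖cocycle T A k x v‖) atTop atTop)
    (τ : M → EuclideanSpace ℝ (Fin d)) (hτm : Measurable τ)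
    (hτ : ∀ᵐ x ∂μ, τ (T x) = A x (τ x)) :
    τ =ᵐ[μ] 0 := by
  -- a.e., the orbit identity holds at every iterate
  have hiter : ∀ᵐ x ∂μ, ∀ k : ℕ, τ (T^[k] x) = cocycle T A k x (τ x) := by
    have h1 : ∀ᵐ x ∂μ, ∀ k : ℕ, τ (T (T^[k] x)) = A (T^[k] x) (τ (T^[k] x)) := by
      rw [ae_all_iff]
      intro k
      exact (hT.iterate k).quasiMeasurePreserving.ae hτ
    filter_upwards [h1] with x hx
    intro k
    induction k with
    | zero => rfl
    | succ k ih =>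
        rw [Function.iterate_succ_apply', hx k, ih, cocycle_succ_apply]
  by_contra hne
  have hBpos : 0 < μ {x | τ x ≠ 0} := by
    rw [pos_iff_ne_zero]
    intro h
    exact hne (by rwa [EventuallyEq, ae_iff])
  set B : Set M := {x | τ x ≠ 0} with hBdef
  -- choose a level n with μ {‖τ‖ > n} < μ B
  set S : ℕ → Set M := fun n => {x | (n : ℝ) < ‖τ x‖} with hSdef
  have hSmeas : ∀ n, MeasurableSet (S n) := fun n =>
    measurableSet_lt measurable_const hτm.norm
  have hanti : Antitone S := by
    intro m n hmn x hx
    have hx' : (n : ℝ) < ‖τ x‖ := hx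
    exact lt_of_le_of_lt (by exact_mod_cast hmn) hx'
  have hInter : ⋂ n, S n = ∅ := by
    ext x
    simp only [Set.mem_iInter, Set.mem_empty_iff_false, iff_false, not_forall]
    obtain ⟨n, hn⟩ := exists_nat_gt ‖τ x‖
    exact ⟨n, by simpa [hSdef] using hn.le⟩
  have htend : Tendsto (fun n => μ (S n)) atTop (nhds 0) := by
    have := tendsto_measure_iInter_atTop (μ := μ)
      (fun n => (hSmeas n).nullMeasurableSet) hanti ⟨0, measure_ne_top μ _⟩
    rwa [hInter, measure_empty] at this
  obtain ⟨n, hn⟩ : ∃ n, μ (S n) < μ B := by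
    rcases (htend.eventually_lt_const hBpos).exists with ⟨n, hn⟩
    exact ⟨n, hn⟩
  -- a.e. x in B eventually enters S n along the orbit
  have hae : ∀ᵐ x ∂μ, x ∈ B → x ∈ ⋃ N, ⋂ k ∈ Set.Ici N, T^[k] ⁻¹' (S n) := by
    filter_upwards [hgrow, hiter] with x hg hi hxB
    have := (hg (τ x) hxB).eventually_gt_atTop (n : ℝ)
    rw [eventually_atTop] at this
    obtain ⟨N, hN⟩ := this
    refine Set.mem_iUnion.2 ⟨N, ?_⟩
    simp only [Set.mem_iInter, Set.mem_Ici, Set.mem_preimage]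
    intro k hk
    show (n : ℝ) < ‖τ (T^[k] x)‖
    rw [hi k]
    exact hN k hk
  -- measure bound
  have hle : μ B ≤ μ (⋃ N, ⋂ k ∈ Set.Ici N, T^[k] ⁻¹' (S n)) := by
    calc μ B ≤ μ ((⋃ N, ⋂ k ∈ Set.Ici N, T^[k] ⁻¹' (S n)) ∪ {x | ¬(x ∈ B → x ∈ ⋃ N, ⋂ k ∈ Set.Ici N, T^[k] ⁻¹' (S n))}) := by
          apply measure_mono
          intro x hx
          by_cases h : x ∈ ⋃ N, ⋂ k ∈ Set.Ici N, T^[k] ⁻¹' (S n)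
          · exact Or.inl h
          · exact Or.inr (fun himp => h (himp hx))
      _ ≤ μ (⋃ N, ⋂ k ∈ Set.Ici N, T^[k] ⁻¹' (S n)) + μ {x | ¬(x ∈ B → x ∈ ⋃ N, ⋂ k ∈ Set.Ici N, T^[k] ⁻¹' (S n))} := measure_union_le _ _
      _ = μ (⋃ N, ⋂ k ∈ Set.Ici N, T^[k] ⁻¹' (S n)) := by
          rw [ae_iff.mp hae, add_zero]
  have hub : μ (⋃ N, ⋂ k ∈ Set.Ici N, T^[k] ⁻¹' (S n)) ≤ μ (S n) := by
    have hmono : Monotone (fun N => ⋂ k ∈ Set.Ici N, T^[k] ⁻¹' (S n)) := by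
      intro N₁ N₂ h12 x hx
      simp only [Set.mem_iInter, Set.mem_Ici] at hx ⊢
      exact fun k hk => hx k (h12.trans hk)
    rw [Directed.measure_iUnion hmono.directed_le]
    refine iSup_le fun N => ?_
    calc μ (⋂ k ∈ Set.Ici N, T^[k] ⁻¹' (S n)) ≤ μ (T^[N] ⁻¹' (S n)) :=
          measure_mono (Set.biInter_subset_of_mem (Set.mem_Ici.mpr le_rfl))
      _ = μ (S n) := (hT.iterate N).measure_preimage (hSmeas n).nullMeasurableSet
  exact absurd (hle.trans hub) (not_le.mpr hn)
end

section
/- Let f : ℝ → ℝ, λ ∈ ℝ, and b : ℕ → ℝ. Assume that limsup_{k → ∞, k ∈ ℕ} f(k)/k ≤ λ, that b(k)/k → 0 as k → ∞, and that f(k + ε) ≤ f(k) + b(k) for every k ∈ ℕ and every ε ∈ [0, 1]. Then limsup_{t → ∞, t ∈ ℝ} f(t)/t ≤ λ. -/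
open Filter

/-- If `limsup_{k ∈ ℕ} f(k)/k ≤ l`, `b(k)/k → 0`, and
`f(k + ε) ≤ f(k) + b(k)` for every `k ∈ ℕ` and `ε ∈ [0, 1]`, then
`limsup_{t ∈ ℝ} f(t)/t ≤ l`. -/
theorem limsup_real_of_limsup_nat (f : ℝ → ℝ) (l : ℝ) (b : ℕ → ℝ)
    (h1 : limsup (fun k : ℕ => f k / k) atTop ≤ l)
    (h2 : Tendsto (fun k : ℕ => b k / k) atTop (nhds 0))
    (h3 : ∀ (k : ℕ) (ε : ℝ), ε ∈ Set.Icc (0 : ℝ) 1 → f (k + ε) ≤ f k + b k) :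
    limsup (fun t : ℝ => f t / t) atTop ≤ l := by
  -- transfer of eventual bounds from real times to integer times
  have htrans : ∀ a : ℝ, (∀ᶠ t : ℝ in atTop, f t / t ≤ a) →
      ∀ᶠ k : ℕ in atTop, f k / k ≤ a := by
    intro a ha
    exact (tendsto_natCast_atTop_atTop (R := ℝ)).eventually ha
  by_cases hbdd : IsBoundedUnder (· ≤ ·) atTop (fun k : ℕ => f k / k)
  · -- main case
    have key : ∀ ε > (0:ℝ), ∀ᶠ t : ℝ in atTop, f t / t ≤ l + ε := by
      intro ε hε
      have hε'pos : 0 < ε / 3 := by positivity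
      have hA : ∀ᶠ k : ℕ in atTop, f k / k < l + ε / 3 :=
        eventually_lt_of_limsup_lt (lt_of_le_of_lt h1 (by linarith)) hbdd
      have hB : ∀ᶠ k : ℕ in atTop, |b k / k| < ε / 3 := by
        have := h2.eventually (Metric.ball_mem_nhds (0:ℝ) hε'pos)
        filter_upwards [this] with k hk
        rwa [Real.dist_eq, sub_zero] at hk
      rw [eventually_atTop] at hA hB
      obtain ⟨K1, hK1⟩ := hA
      obtain ⟨K2, hK2⟩ := hB
      set c : ℝ := l + 2 * (ε / 3) with hc
      filter_upwards [eventually_ge_atTop ((K1 : ℝ) + 1),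
        eventually_ge_atTop ((K2 : ℝ) + 1),
        eventually_ge_atTop (|c| / (ε / 3)),
        eventually_ge_atTop (1 : ℝ)] with t ht1 ht2 htc ht0
      have htpos : (0:ℝ) < t := by linarith
      set k := ⌊t⌋₊ with hk
      have hk1 : (k : ℝ) ≤ t := Nat.floor_le (by linarith)
      have hk2 : t < (k : ℝ) + 1 := Nat.lt_floor_add_one t
      have hkK1 : K1 ≤ k := Nat.le_floor (by linarith)
      have hkK2 : K2 ≤ k := Nat.le_floor (by linarith)
      have hkpos : (0:ℝ) < k := by
        have : (1:ℕ) ≤ k := Nat.le_floor (by exact_mod_cast ht0)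
        exact_mod_cast this
      have hfk : f k < (l + ε / 3) * k := by
        have := hK1 k hkK1
        rwa [div_lt_iff₀ hkpos] at this
      have hbk : b k < (ε / 3) * k := by
        have := (abs_lt.mp (hK2 k hkK2)).2
        rwa [div_lt_iff₀ hkpos] at this
      have hft : f t ≤ f k + b k := by
        have := h3 k (t - k) ⟨by linarith, by linarith⟩
        simpa using this
      have hftc : f t ≤ c * k := by
        rw [hc]; nlinarith
      have hck : c * k ≤ c * t + |c| := by
        rcases le_or_gt 0 c with h | h
        · nlinarith [abs_nonneg c]
        · have : c * k ≤ c * (t - 1) := by nlinarith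
          rw [abs_of_neg h]; linarith
      have hcabs : |c| ≤ (ε / 3) * t := by
        rw [div_le_iff₀ hε'pos] at htc
        linarith
      rw [div_le_iff₀ htpos]
      calc f t ≤ c * k := hftc
        _ ≤ c * t + |c| := hck
        _ ≤ c * t + (ε / 3) * t := by linarith
        _ = (l + ε) * t := by rw [hc]; ring
    by_cases hRb : BddBelow {a : ℝ | ∀ᶠ t : ℝ in atTop, f t / t ≤ a}
    · refine le_of_forall_pos_le_add fun ε hε => ?_
      rw [limsup_eq]
      exact csInf_le hRb (key ε hε)
    · rw [limsup_eq, Real.sInf_of_not_bddBelow hRb]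
      have hSN : ¬ BddBelow {a : ℝ | ∀ᶠ k : ℕ in atTop, f k / k ≤ a} := by
        rintro ⟨m, hm⟩
        exact hRb ⟨m, fun a ha => hm (htrans a ha)⟩
      have := h1
      rw [limsup_eq, Real.sInf_of_not_bddBelow hSN] at this
      exact this
  · -- degenerate case: f k / k not eventually bounded above on ℕ
    have hnat : {a : ℝ | ∀ᶠ k : ℕ in atTop, f k / k ≤ a} = ∅ := by
      rw [Set.eq_empty_iff_forall_notMem]
      intro a ha
      exact hbdd ⟨a, eventually_map.2 ha⟩
    have h0 : (0:ℝ) ≤ l := by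
      have := h1
      rwa [limsup_eq, hnat, Real.sInf_empty] at this
    have hreal : {a : ℝ | ∀ᶠ t : ℝ in atTop, f t / t ≤ a} = ∅ := by
      rw [Set.eq_empty_iff_forall_notMem]
      intro a ha
      exact hbdd ⟨a, eventually_map.2 (htrans a ha)⟩
    rw [limsup_eq, hreal, Real.sInf_empty]
    exact h0
end

section
/- Let E and F be real inner product spaces, α > 0, and let u : ℝ → E and v : ℝ → F be differentiable functions such that for all t ∈ [0, 1]: ‖u(t)‖² + ‖v(t)‖² ≤ α²/2, and the function t ↦ √(α² − ‖v(t)‖²) · u(t) is constant on [0, 1]. Then ‖u′(t)‖ ≤ ‖v′(t)‖ for all t ∈ [0, 1]. -/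
open Real

/-- Let `E`, `F` be real inner product spaces, `α > 0`, and let
`u : ℝ → E`, `v : ℝ → F` be differentiable with `‖u t‖² + ‖v t‖² ≤ α²/2` on `[0,1]`
and `t ↦ √(α² − ‖v t‖²) • u t` constant on `[0,1]`.  Then `‖u′ t‖ ≤ ‖v′ t‖` on `[0,1]`. -/
theorem graph_path_estimate {E F : Type*}
    [NormedAddCommGroup E] [InnerProductSpace ℝ E]
    [NormedAddCommGroup F] [InnerProductSpace ℝ F]
    (α : ℝ) (hα : 0 < α) (u : ℝ → E) (v : ℝ → F)
    (hu : Differentiable ℝ u) (hv : Differentiable ℝ v)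
    (hbound : ∀ t ∈ Set.Icc (0 : ℝ) 1, ‖u t‖ ^ 2 + ‖v t‖ ^ 2 ≤ α ^ 2 / 2)
    (hconst : ∃ c : E, ∀ t ∈ Set.Icc (0 : ℝ) 1,
      Real.sqrt (α ^ 2 - ‖v t‖ ^ 2) • u t = c) :
    ∀ t ∈ Set.Icc (0 : ℝ) 1, ‖deriv u t‖ ≤ ‖deriv v t‖ := by
  intro t ht
  obtain ⟨c, hc⟩ := hconst
  have hbt := hbound t ht
  set a : ℝ := α ^ 2 - ‖v t‖ ^ 2 with ha_def
  have hu2 : (0:ℝ) ≤ ‖u t‖ ^ 2 := sq_nonneg _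
  have hv2 : (0:ℝ) ≤ ‖v t‖ ^ 2 := sq_nonneg _
  have ha : α ^ 2 / 2 ≤ a := by simp only [ha_def]; nlinarith
  have hapos : 0 < a := by nlinarith
  -- derivative of q t = ⟪v t, v t⟫
  set I : ℝ := inner ℝ (v t) (deriv v t) with hI_def
  have hq : HasDerivAt (fun s => (inner ℝ (v s) (v s) : ℝ)) (2 * I) t := by
    have := (hv t).hasDerivAt.inner ℝ (hv t).hasDerivAt
    have hsym : (inner ℝ (deriv v t) (v t) : ℝ) = I := real_inner_comm _ _
    rw [hsym] at this
    rw [← hI_def, ← two_mul] at this; exact this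
  have hqeq : (fun s => α ^ 2 - ‖v s‖ ^ 2) = fun s => α ^ 2 - (inner ℝ (v s) (v s) : ℝ) := by
    funext s; rw [real_inner_self_eq_norm_sq]
  have hiq : HasDerivAt (fun s => α ^ 2 - ‖v s‖ ^ 2) (-(2 * I)) t := by
    rw [hqeq]
    have h := (hasDerivAt_const t (α ^ 2)).sub hq; rw [zero_sub] at h; exact h
  have hane : α ^ 2 - ‖v t‖ ^ 2 ≠ 0 := by rw [← ha_def]; exact ne_of_gt hapos
  have hf : HasDerivAt (fun s => Real.sqrt (α ^ 2 - ‖v s‖ ^ 2))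
      (-(2 * I) / (2 * Real.sqrt a)) t := by
    simpa [ha_def] using hiq.sqrt hane
  have hg : HasDerivAt (fun s => Real.sqrt (α ^ 2 - ‖v s‖ ^ 2) • u s)
      (Real.sqrt a • deriv u t + (-(2 * I) / (2 * Real.sqrt a)) • u t) t := by
    exact hf.smul (hu t).hasDerivAt
  -- the derivative within Icc is zero
  have hunique : UniqueDiffWithinAt ℝ (Set.Icc (0:ℝ) 1) t :=
    (uniqueDiffOn_Icc one_pos) t ht
  have hzero : HasDerivWithinAt (fun s => Real.sqrt (α ^ 2 - ‖v s‖ ^ 2) • u s)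
      0 (Set.Icc (0:ℝ) 1) t :=
    (hasDerivWithinAt_const t _ c).congr hc (hc t ht)
  have heq0 : Real.sqrt a • deriv u t + (-(2 * I) / (2 * Real.sqrt a)) • u t = 0 := by
    rw [← hg.hasDerivWithinAt.derivWithin hunique, hzero.derivWithin hunique]
  have hsqrt_pos : 0 < Real.sqrt a := Real.sqrt_pos.mpr hapos
  have hsq : Real.sqrt a * Real.sqrt a = a := Real.mul_self_sqrt hapos.le
  -- solve for deriv u t
  have hderiv_u : deriv u t = (I / a) • u t := by
    have h1 : Real.sqrt a • deriv u t = (2 * I / (2 * Real.sqrt a)) • u t := by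
      have := heq0
      rw [add_eq_zero_iff_eq_neg] at this
      rw [this, ← neg_smul]
      congr 1
      field_simp
    have h2 : deriv u t = (Real.sqrt a)⁻¹ • ((2 * I / (2 * Real.sqrt a)) • u t) := by
      rw [← h1, smul_smul, inv_mul_cancel₀ hsqrt_pos.ne', one_smul]
    rw [h2, smul_smul]
    congr 1
    field_simp
    ring_nf
    rw [Real.sq_sqrt hapos.le]
  rw [hderiv_u, norm_smul, Real.norm_eq_abs, abs_div, abs_of_pos hapos]
  have hvu : ‖u t‖ * ‖v t‖ ≤ a := by simp only [ha_def]; nlinarith [sq_nonneg (‖u t‖ - ‖v t‖)]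
  have hCS : |I| ≤ ‖v t‖ * ‖deriv v t‖ := abs_real_inner_le_norm _ _
  have h1 : |I| / a * ‖u t‖ ≤ (‖v t‖ * ‖deriv v t‖) / a * ‖u t‖ := by
    gcongr
  have h2 : (‖v t‖ * ‖deriv v t‖) / a * ‖u t‖ = (‖u t‖ * ‖v t‖ / a) * ‖deriv v t‖ := by ring
  have h3 : ‖u t‖ * ‖v t‖ / a ≤ 1 := by rw [div_le_one hapos]; exact hvu
  have h4 : (‖u t‖ * ‖v t‖ / a) * ‖deriv v t‖ ≤ 1 * ‖deriv v t‖ :=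
    mul_le_mul_of_nonneg_right h3 (norm_nonneg _)
  linarith [h1, h2 ▸ h1, h4]
end

section
/- Let s ≥ 1, let λ : Fin s → ℝ be strictly increasing with all values negative, and let r ≥ 1 be the natural number with (r+1)·λ(s) < λ(1) ≤ r·λ(s) (i.e., r = ⌊λ(1)/λ(s)⌋). Suppose 1 = i₀ < i₁ < ⋯ < i_m ≤ s is a sequence of indices such that for each k with 1 ≤ k ≤ m, i_k is the least index i > i_{k−1} with λ(i_{k−1}) − λ(i) ≤ λ(s). Then λ(i_k) > (r − k + 1)·λ(s) for every 1 ≤ k ≤ m, and consequently m ≤ r − 1 (the conglomeration process terminates after fewer than r steps, producing at most r blocks). -/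
/-- Let `λ(1) < ⋯ < λ(s) < 0`, and let `r ≥ 1` be the natural number
with `(r+1)·λ(s) < λ(1) ≤ r·λ(s)` (i.e. `r = ⌊λ(1)/λ(s)⌋`).  Suppose
`1 = i₀ < i₁ < ⋯ < i_m ≤ s` is a sequence of indices such that for each
`1 ≤ k ≤ m`, `i_k` is the least index `i > i_{k−1}` with
`λ(i_{k−1}) − λ(i) ≤ λ(s)`.  Then `λ(i_k) > (r − k + 1)·λ(s)` for every
`1 ≤ k ≤ m`, and consequently `m ≤ r − 1`. -/
theorem conglomeration_terminates (s : ℕ) (hs : 1 ≤ s) (lam : ℕ → ℝ)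
    (hmono : ∀ i j, 1 ≤ i → i < j → j ≤ s → lam i < lam j)
    (hneg : ∀ i, 1 ≤ i → i ≤ s → lam i < 0)
    (r : ℕ) (hr : 1 ≤ r)
    (hr1 : ((r : ℝ) + 1) * lam s < lam 1) (hr2 : lam 1 ≤ (r : ℝ) * lam s)
    (m : ℕ) (idx : ℕ → ℕ)
    (h0 : idx 0 = 1)
    (hlt : ∀ k, k < m → idx k < idx (k + 1))
    (hms : idx m ≤ s)
    (hleast : ∀ k, 1 ≤ k → k ≤ m →
      IsLeast {i : ℕ | idx (k - 1) < i ∧ i ≤ s ∧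
        lam (idx (k - 1)) - lam i ≤ lam s} (idx k)) :
    (∀ k, 1 ≤ k → k ≤ m → ((r : ℝ) - k + 1) * lam s < lam (idx k)) ∧
    m ≤ r - 1 := by
  have hs0 : lam s < 0 := hneg s hs le_rfl
  have key : ∀ k, 1 ≤ k → k ≤ m → ((r : ℝ) - k + 1) * lam s < lam (idx k) := by
    intro k
    induction k with
    | zero => intro h; omega
    | succ k ih =>
      intro _ hkm
      obtain ⟨⟨hlt', hle', hmem⟩, _⟩ := hleast (k + 1) (by omega) hkm
      simp only [Nat.add_sub_cancel] at hlt' hmem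
      rcases Nat.eq_zero_or_pos k with hk0 | hk1
      · subst hk0
        rw [h0] at hmem
        push_cast
        linarith
      · have hprev := ih hk1 (by omega)
        push_cast
        push_cast at hprev
        linarith
  refine ⟨key, ?_⟩
  by_contra hm
  have hmr : r ≤ m := by omega
  have h1 : ((r : ℝ) - m + 1) * lam s < lam (idx m) := key m (by omega) le_rfl
  have hm1 : 1 ≤ m := by omega
  obtain ⟨⟨hlt', _, _⟩, _⟩ := hleast m hm1 le_rfl
  have hidx1 : 1 ≤ idx m := by omega
  have hle : lam (idx m) ≤ lam s := by
    rcases eq_or_lt_of_le hms with h | h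
    · rw [h]
    · exact le_of_lt (hmono _ _ hidx1 h le_rfl)
  have hc : ((r : ℝ) - m + 1) ≤ 1 := by
    have : (r : ℝ) ≤ m := by exact_mod_cast hmr
    linarith
  nlinarith [hc, h1, hle, hs0]
end
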